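/- arXiv:2408.03504 — 7 statements merged into one kernel-verified Lean document; each statement's English description precedes it below -/
import Mathlib

section
/- Over any field F, every k-partite 1-tree G with N vertices satisfies rank_F(I_G) = N - (k-1), where I_G is the incidence matrix of G. -/
/-- A k-partite 1-tree: built from K_1^k (a single hyperedge on k vertices)
by a sequence of degree-one extensions. -/
inductive IsOneTree (k : ℕ) {α : Type*} [DecidableEq α] :
    Finset α → Finset (Finset α) → Prop
  | base (V : Finset α) (hV : V.card = k) : IsOneTree k V {V}
  | extend (V : Finset α) (E : Finset (Finset α)) (h : IsOneTree k V E)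
      (v : α) (hv : v ∉ V) (s : Finset α) (hs : s ⊆ V) (hcard : s.card = k - 1) :
      IsOneTree k (insert v V) (insert (insert v s) E)

section Aux

variable {F : Type*} [Field F]

/-- Extension by zero at `none`. -/
def extOption (F : Type*) [Field F] (n : Type*) : (n → F) →ₗ[F] (Option n → F) where
  toFun y := fun o => o.elim 0 y
  map_add' y z := by funext o; cases o <;> simp
  map_smul' c y := by funext o; cases o <;> simp

lemma extOption_injective (n : Type*) : Function.Injective (extOption F n) := by
  intro y z h
  funext j
  have := congrFun h (some j)
  simpa [extOption] using this

lemma reindex_rank {m m' n n' : Type*} [Fintype n] [Fintype n']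
    (e₁ : m ≃ m') (e₂ : n ≃ n') (A : Matrix m n F) :
    (Matrix.reindex e₁ e₂ A).rank = A.rank := by
  rw [Matrix.rank, Matrix.rank, Matrix.mulVecLin_reindex, LinearMap.range_comp,
    LinearMap.range_comp, LinearEquiv.range, Submodule.map_top, LinearEquiv.finrank_map_eq]

/-- Key lemma: adding one row and one column, where the new row is
the standard basis vector supported on the new column, raises rank by one. -/
lemma rank_option {m n : Type*} [Fintype m] [Fintype n]
    (M : Matrix (Option m) (Option n) F)
    (h0 : ∀ j, M none (some j) = 0) (h1 : M none none = 1) :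
    M.rank = (M.submatrix some some).rank + 1 := by
  classical
  set A := M.submatrix some some with hA
  -- kernels agree
  have hker : LinearMap.ker M.mulVecLin
      = (LinearMap.ker A.mulVecLin).map (extOption F n) := by
    ext x
    constructor
    · intro hx
      have hx' : ∀ i, M.mulVec x i = 0 := fun i => congrFun (LinearMap.mem_ker.mp hx) i
      have hnone : x none = 0 := by
        have := hx' none
        simpa [Matrix.mulVec, dotProduct, Fintype.sum_option, h0, h1] using this
      refine ⟨fun j => x (some j), ?_, ?_⟩
      · refine LinearMap.mem_ker.mpr ?_
        funext i
        have := hx' (some i)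
        simp only [Matrix.mulVec, dotProduct, Fintype.sum_option, hnone,
          mul_zero, zero_add, add_zero] at this ⊢
        simpa [hA, Matrix.mulVecLin_apply, Matrix.mulVec, dotProduct, hnone] using this
      · funext o
        cases o with
        | none => simp [extOption, hnone]
        | some j => simp [extOption]
    · rintro ⟨y, hy, rfl⟩
      have hy' : ∀ i, A.mulVec y i = 0 := fun i => congrFun (LinearMap.mem_ker.mp hy) i
      refine LinearMap.mem_ker.mpr ?_
      funext i
      cases i with
      | none =>
        simp [Matrix.mulVecLin_apply, Matrix.mulVec, dotProduct,
          Fintype.sum_option, h0, h1, extOption]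
      | some i =>
        have := hy' i
        simp only [hA, Matrix.mulVec, dotProduct, Matrix.submatrix_apply] at this
        simp [Matrix.mulVecLin_apply, Matrix.mulVec, dotProduct,
          Fintype.sum_option, extOption, this]
  have hkerfin : Module.finrank F (LinearMap.ker M.mulVecLin)
      = Module.finrank F (LinearMap.ker A.mulVecLin) := by
    rw [hker]
    exact (LinearEquiv.finrank_eq
      (Submodule.equivMapOfInjective _ (extOption_injective n) _)).symm
  have hM : M.rank + Module.finrank F (LinearMap.ker M.mulVecLin)
      = Fintype.card n + 1 := by
    have := LinearMap.finrank_range_add_finrank_ker M.mulVecLin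
    rwa [Module.finrank_fintype_fun_eq_card, Fintype.card_option] at this
  have hA' : A.rank + Module.finrank F (LinearMap.ker A.mulVecLin)
      = Fintype.card n := by
    have := LinearMap.finrank_range_add_finrank_ker A.mulVecLin
    rwa [Module.finrank_fintype_fun_eq_card] at this
  omega

/-- Every edge of a one-tree is a subset of the vertex set. -/
lemma IsOneTree.edge_subset {k : ℕ} {α : Type*} [DecidableEq α]
    {V : Finset α} {E : Finset (Finset α)} (h : IsOneTree k V E) :
    ∀ e ∈ E, e ⊆ V := by
  induction h with
  | base V hV => intro e he; rw [Finset.mem_singleton] at he; subst he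
                 exact Finset.Subset.refl _
  | extend V E h v hv s hs hcard ih =>
    intro e he
    rcases Finset.mem_insert.mp he with rfl | he
    · exact Finset.insert_subset_insert _ hs
    · exact (ih e he).trans (Finset.subset_insert _ _)

lemma IsOneTree.k_le_card {k : ℕ} {α : Type*} [DecidableEq α]
    {V : Finset α} {E : Finset (Finset α)} (h : IsOneTree k V E) :
    k ≤ V.card := by
  induction h with
  | base V hV => omega
  | extend V E h v hv s hs hcard ih =>
    rw [Finset.card_insert_of_notMem hv]; omega

end Aux

/-- Over any field F, every k-partite 1-tree G with N vertices satisfies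
rank_F(I_G) = N - (k-1), where I_G is the incidence matrix. -/
theorem stmt_3 {α : Type*} [DecidableEq α] (F : Type*) [Field F] (k : ℕ)
    (V : Finset α) (E : Finset (Finset α)) (h : IsOneTree k V E) :
    (Matrix.of fun (v : ↥V) (e : ↥E) =>
        if (v : α) ∈ (e : Finset α) then (1 : F) else 0).rank
      = V.card - (k - 1) := by
  classical
  induction h with
  | base V hV =>
    have hM : (Matrix.of fun (v : ↥V) (e : ↥({V} : Finset (Finset α))) =>
        if (v : α) ∈ (e : Finset α) then (1 : F) else 0)
        = Matrix.of fun _ _ => (1 : F) := by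
      ext v e
      have he : (e : Finset α) = V := Finset.mem_singleton.mp e.2
      simp [he, v.2]
    rw [hM]
    rcases Nat.eq_zero_or_pos k with rfl | hk
    · have hV0 : V = ∅ := Finset.card_eq_zero.mp hV
      subst hV0
      have : (Matrix.of fun (_ : ↥(∅ : Finset α)) (_ : ↥({∅} : Finset (Finset α))) =>
          (1 : F)) = 0 := by
        ext v e; exact absurd v.2 (Finset.notMem_empty _)
      rw [this, Matrix.rank_zero]
      simp
    · have hVne : V.Nonempty := Finset.card_pos.mp (hV ▸ hk)
      obtain ⟨x, hx⟩ := hVne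
      have hle : (Matrix.of fun (_ : ↥V) (_ : ↥({V} : Finset (Finset α))) => (1 : F)).rank
          ≤ 1 := by
        have := Matrix.rank_le_card_width
          (Matrix.of fun (_ : ↥V) (_ : ↥({V} : Finset (Finset α))) => (1 : F))
        simpa using this
      have hge : 1 ≤ (Matrix.of fun (_ : ↥V) (_ : ↥({V} : Finset (Finset α))) =>
          (1 : F)).rank := by
        rw [Matrix.rank]
        refine Module.finrank_pos_iff.mpr ?_
        refine ⟨⟨(fun _ => 1), LinearMap.mem_range.mpr ⟨fun _ => 1, ?_⟩⟩, 0, fun hc => ?_⟩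
        · funext i
          simp [Matrix.mulVecLin_apply, Matrix.mulVec, dotProduct]
        · have := congrArg (fun z => (z : ↥V → F) ⟨x, hx⟩) (Subtype.ext_iff.mp hc)
          simpa using this
      have : (Matrix.of fun (_ : ↥V) (_ : ↥({V} : Finset (Finset α))) => (1 : F)).rank = 1 :=
        le_antisymm hle hge
      rw [this, hV]
      omega
  | extend V E hT v hv s hs hcard ih =>
    set e' : Finset α := insert v s with he'def
    have hsub : ∀ e ∈ E, e ⊆ V := hT.edge_subset
    have he'E : e' ∉ E := fun hmem =>
      hv (hsub e' hmem (Finset.mem_insert_self v s))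
    set M := (Matrix.of fun (w : ↥(insert v V)) (e : ↥(insert e' E)) =>
        if (w : α) ∈ (e : Finset α) then (1 : F) else 0) with hMdef
    set eV : ↥(insert v V) ≃ Option ↥V := Finset.subtypeInsertEquivOption hv with heV
    set eE : ↥(insert e' E) ≃ Option ↥E := Finset.subtypeInsertEquivOption he'E with heE
    have hrank : M.rank = (Matrix.reindex eV eE M).rank := (reindex_rank eV eE M).symm
    have hsymmV : ∀ o : Option ↥V, ((eV.symm o : ↥(insert v V)) : α)
        = o.elim v (fun w => (w : α)) := by
      intro o; cases o <;> rfl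
    have hsymmE : ∀ o : Option ↥E, ((eE.symm o : ↥(insert e' E)) : Finset α)
        = o.elim e' (fun e => (e : Finset α)) := by
      intro o; cases o <;> rfl
    have h0 : ∀ j : ↥E, (Matrix.reindex eV eE M) none (some j) = 0 := by
      intro j
      have hvj : v ∉ (j : Finset α) := fun hmem => hv (hsub _ j.2 hmem)
      simp [Matrix.reindex_apply, hMdef, hsymmV, hsymmE, hvj]
    have h1 : (Matrix.reindex eV eE M) none none = 1 := by
      simp [Matrix.reindex_apply, hMdef, hsymmV, hsymmE, he'def,
        Finset.mem_insert_self]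
    have hsub' : (Matrix.reindex eV eE M).submatrix some some
        = (Matrix.of fun (w : ↥V) (e : ↥E) =>
            if (w : α) ∈ (e : Finset α) then (1 : F) else 0) := by
      ext w e
      simp [Matrix.reindex_apply, hMdef, hsymmV, hsymmE]
    have := rank_option (Matrix.reindex eV eE M) h0 h1
    rw [hsub', ih] at this
    rw [hrank, this, Finset.card_insert_of_notMem hv]
    have hk := hT.k_le_card
    omega
end

section
/- Let G be a k-partite k-uniform hypergraph on N vertices with vertex classes V_1,...,V_k, and let p = (p_1,...,p_N) ∈ ℝ^N be generic (the entries are algebraically independent over ℚ). Then the 1-dimensional framework (G,p) is globally rigid if and only if rank_ℝ(I_G) = rank_{GF(2)}(I_G) = N - (k-1). -/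
open Finset Matrix

/-- Sign-counting bridge between products of ±1 in ℝ and sums in `ZMod 2`. -/
lemma sign_prod_eq_one_iff {ι : Type*} [DecidableEq ι] (t : Finset ι) (g : ι → ZMod 2) :
    (∏ i ∈ t, (if g i = 0 then (1 : ℝ) else -1)) = 1 ↔ ∑ i ∈ t, g i = 0 := by
  classical
  have h1 : (∏ i ∈ t, (if g i = 0 then (1 : ℝ) else -1))
      = (-1 : ℝ) ^ (t.filter fun i => ¬ g i = 0).card := by
    rw [Finset.prod_ite, Finset.prod_const, Finset.prod_const, one_pow, one_mul]
  have h2 : ∑ i ∈ t, g i = ((t.filter fun i => ¬ g i = 0).card : ZMod 2) := by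
    have : ∀ i ∈ t, g i = (if g i = 0 then (0 : ZMod 2) else 1) := by
      intro i _
      by_cases h : g i = 0
      · simp [h]
      · have : g i = 1 := by
          have := (by decide : ∀ x : ZMod 2, x = 0 ∨ x = 1) (g i)
          tauto
        simp [h, this]
    rw [Finset.sum_congr rfl this, Finset.sum_ite, Finset.sum_const_zero,
      Finset.sum_const, zero_add, nsmul_eq_mul, mul_one]
  rw [h1, h2]
  rw [ZMod.natCast_eq_zero_iff, neg_one_pow_eq_one_iff_even (by norm_num : (-1:ℝ) ≠ 1)]
  exact ⟨fun h => h.two_dvd, fun h => (even_iff_two_dvd).2 h⟩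

/-- The rank condition on the incidence matrix over a field `F` is equivalent to
the statement that every vector in the cokernel is constant on classes with zero sum. -/
lemma rank_iff_coker {k : ℕ} {V E : Type*} [Fintype V] [Fintype E] [DecidableEq V]
    (F : Type) [Field F] (part : V → Fin k) (hpart : Function.Surjective part)
    (edge : E → Finset V)
    (huniform : ∀ (e : E) (i : Fin k), ∃! v, v ∈ edge e ∧ part v = i) (hk : 0 < k) :
    (Matrix.of fun (v : V) (e : E) => if v ∈ edge e then (1 : F) else 0).rank
        = Fintype.card V - (k - 1)
      ↔ ∀ x : V → F, (∀ e, ∑ v ∈ edge e, x v = 0) →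
          ∃ c : Fin k → F, (∑ i, c i = 0) ∧ ∀ v, x v = c (part v) := by
  classical
  set M : Matrix V E F := Matrix.of fun v e => if v ∈ edge e then (1 : F) else 0 with hM
  set L : (V → F) →ₗ[F] (E → F) := Mᵀ.mulVecLin with hLdef
  have hL : ∀ (x : V → F) (e : E), L x e = ∑ v ∈ edge e, x v := by
    intro x e
    have : L x e = ∑ v, (if v ∈ edge e then (1 : F) else 0) * x v := by
      simp only [hLdef, hM, Matrix.mulVecLin_apply, Matrix.mulVec, dotProduct,
        Matrix.transpose_apply, Matrix.of_apply]
    rw [this]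
    rw [Finset.sum_congr rfl (fun v _ => by rw [ite_mul, one_mul, zero_mul])]
    rw [Finset.sum_ite_mem, Finset.univ_inter]
  set S : (Fin k → F) →ₗ[F] F := ∑ i, LinearMap.proj i with hSdef
  have hS : ∀ c : Fin k → F, S c = ∑ i, c i := by
    intro c; simp [hSdef]
  set W : Submodule F (V → F) := (LinearMap.ker S).map (LinearMap.funLeft F F part) with hWdef
  have hinj : Function.Injective (LinearMap.funLeft F F part) :=
    LinearMap.funLeft_injective_of_surjective F F part hpart
  have hWmem : ∀ x : V → F,
      x ∈ W ↔ ∃ c : Fin k → F, (∑ i, c i = 0) ∧ ∀ v, x v = c (part v) := by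
    intro x
    constructor
    · rintro ⟨c, hc, rfl⟩
      have hc' : S c = 0 := hc
      rw [hS] at hc'
      exact ⟨c, hc', fun v => rfl⟩
    · rintro ⟨c, hc, hxc⟩
      exact ⟨c, show S c = 0 by rw [hS]; exact hc, by funext v; exact (hxc v).symm⟩
  have hdimS : Module.finrank F (LinearMap.ker S) = k - 1 := by
    have hsur : Function.Surjective S := by
      intro y
      refine ⟨Pi.single ⟨0, hk⟩ y, ?_⟩
      rw [hS]
      simp [Pi.single_apply]
    have h1 := S.finrank_range_add_finrank_ker
    rw [LinearMap.range_eq_top.mpr hsur, finrank_top, Module.finrank_self,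
      Module.finrank_fintype_fun_eq_card, Fintype.card_fin] at h1
    omega
  have hdimW : Module.finrank F W = k - 1 := by
    rw [← hdimS]
    exact (LinearEquiv.finrank_eq
      (Submodule.equivMapOfInjective _ hinj (LinearMap.ker S))).symm
  have hsum_edge : ∀ (e : E) (c : Fin k → F), ∑ v ∈ edge e, c (part v) = ∑ i, c i := by
    intro e c
    refine Finset.sum_nbij' (fun v => part v) (fun i => (huniform e i).exists.choose) ?_ ?_ ?_ ?_ ?_
    · intro v _; exact Finset.mem_univ _
    · intro i _; exact (huniform e i).exists.choose_spec.1
    · intro v hv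
      exact ((huniform e (part v)).unique (huniform e (part v)).exists.choose_spec ⟨hv, rfl⟩)
    · intro i _; exact (huniform e i).exists.choose_spec.2
    · intro v _; rfl
  have hWle : W ≤ LinearMap.ker L := by
    intro x hx
    obtain ⟨c, hc0, hxc⟩ := (hWmem x).1 hx
    rw [LinearMap.mem_ker]
    funext e
    rw [hL]
    calc ∑ v ∈ edge e, x v = ∑ v ∈ edge e, c (part v) :=
          Finset.sum_congr rfl fun v _ => hxc v
      _ = ∑ i, c i := hsum_edge e c
      _ = 0 := hc0
  have hkermem : ∀ x : V → F, x ∈ LinearMap.ker L ↔ ∀ e, ∑ v ∈ edge e, x v = 0 := by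
    intro x
    rw [LinearMap.mem_ker, funext_iff]
    exact ⟨fun h e => by rw [← hL]; exact h e, fun h e => by rw [hL]; exact h e⟩
  have hrank : M.rank = Module.finrank F (LinearMap.range L) := by
    rw [← Matrix.rank_transpose]; rfl
  have hrn : Module.finrank F (LinearMap.range L)
      + Module.finrank F (LinearMap.ker L) = Fintype.card V := by
    rw [L.finrank_range_add_finrank_ker, Module.finrank_fintype_fun_eq_card]
  have hcard : k ≤ Fintype.card V := by
    simpa using Fintype.card_le_of_surjective part hpart
  constructor
  · intro hrk x hx
    have hker : Module.finrank F (LinearMap.ker L) = k - 1 := by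
      rw [hrank] at hrk; omega
    have hWeq : W = LinearMap.ker L :=
      Submodule.eq_of_le_of_finrank_eq hWle (by rw [hdimW, hker])
    have hxW : x ∈ W := by rw [hWeq, hkermem]; exact hx
    exact (hWmem x).1 hxW
  · intro hP
    have hle : LinearMap.ker L ≤ W := by
      intro x hx
      exact (hWmem x).2 (hP x ((hkermem x).1 hx))
    have heq : LinearMap.ker L = W := le_antisymm hle hWle
    have hker : Module.finrank F (LinearMap.ker L) = k - 1 := by rw [heq, hdimW]
    rw [hrank]; omega

/-- For a k-partite k-uniform hypergraph G on N vertices and a generic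
configuration p ∈ ℝ^N (entries algebraically independent over ℚ), the 1-dimensional
framework (G,p) is globally rigid (every q with the same rigidity-map image is
congruent to p) if and only if rank_ℝ(I_G) = rank_{GF(2)}(I_G) = N - (k-1). -/
theorem stmt_5 {k : ℕ} (V E : Type*) [Fintype V] [Fintype E] [DecidableEq V]
    (part : V → Fin k) (hpart : Function.Surjective part)
    (edge : E → Finset V)
    (huniform : ∀ (e : E) (i : Fin k), ∃! v, v ∈ edge e ∧ part v = i)
    (p : V → ℝ) (hp : AlgebraicIndependent ℚ p) :
    (∀ q : V → ℝ, (∀ e, ∏ v ∈ edge e, q v = ∏ v ∈ edge e, p v) →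
        ∃ a : Fin k → ℝ, (∏ i, a i) = 1 ∧ ∀ v, q v = a (part v) * p v)
      ↔ ((Matrix.of fun (v : V) (e : E) => if v ∈ edge e then (1 : ℝ) else 0).rank
            = Fintype.card V - (k - 1)
          ∧ (Matrix.of fun (v : V) (e : E) => if v ∈ edge e then (1 : ZMod 2) else 0).rank
            = Fintype.card V - (k - 1)) := by
  classical
  rcases Nat.eq_zero_or_pos k with hk | hk
  · -- degenerate case k = 0: V is empty and both sides are trivially true
    subst hk
    have hV : IsEmpty V := ⟨fun v => (part v).elim0⟩
    have hcard : Fintype.card V = 0 := Fintype.card_eq_zero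
    constructor
    · intro _
      constructor
      · have h := (Matrix.of fun (v : V) (e : E) =>
            if v ∈ edge e then (1 : ℝ) else 0).rank_le_card_height
        omega
      · have h := (Matrix.of fun (v : V) (e : E) =>
            if v ∈ edge e then (1 : ZMod 2) else 0).rank_le_card_height
        omega
    · intro _ q _
      exact ⟨fun i => i.elim0, by simp, fun v => hV.elim v⟩
  -- main case k ≥ 1
  have hp0 : ∀ v, p v ≠ 0 := fun v => hp.ne_zero v
  rw [rank_iff_coker ℝ part hpart edge huniform hk,
    rank_iff_coker (ZMod 2) part hpart edge huniform hk]
  constructor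
  · -- global rigidity implies both cokernel conditions
    intro hGR
    constructor
    · -- over ℝ, via exponentials
      intro x hx
      obtain ⟨a, ha1, haq⟩ := hGR (fun v => Real.exp (x v) * p v) (by
        intro e
        rw [Finset.prod_mul_distrib, ← Real.exp_sum, hx e, Real.exp_zero, one_mul])
      have haval : ∀ v, a (part v) = Real.exp (x v) :=
        fun v => (mul_right_cancel₀ (hp0 v) (haq v)).symm
      have hapos : ∀ i, 0 < a i := by
        intro i
        obtain ⟨v, rfl⟩ := hpart i
        rw [haval v]; exact Real.exp_pos _
      refine ⟨fun i => Real.log (a i), ?_, ?_⟩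
      · rw [← Real.log_prod (fun i _ => (hapos i).ne'), ha1, Real.log_one]
      · intro v
        show x v = Real.log (a (part v))
        rw [haval v, Real.log_exp]
    · -- over GF(2), via signs
      intro ε hε
      obtain ⟨a, ha1, haq⟩ := hGR (fun v => (if ε v = 0 then (1 : ℝ) else -1) * p v) (by
        intro e
        rw [Finset.prod_mul_distrib, (sign_prod_eq_one_iff _ ε).2 (hε e), one_mul])
      have haval : ∀ v, a (part v) = if ε v = 0 then (1 : ℝ) else -1 :=
        fun v => (mul_right_cancel₀ (hp0 v) (haq v)).symm
      have hapm : ∀ i, a i = 1 ∨ a i = -1 := by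
        intro i
        obtain ⟨v, rfl⟩ := hpart i
        rw [haval v]
        by_cases h : ε v = 0 <;> simp [h]
      refine ⟨fun i => if a i = 1 then 0 else 1, ?_, ?_⟩
      · apply (sign_prod_eq_one_iff univ _).1
        have key : ∀ i : Fin k,
            (if (if a i = 1 then (0 : ZMod 2) else 1) = 0 then (1 : ℝ) else -1) = a i := by
          intro i
          by_cases h : a i = 1
          · simp [h]
          · have ham : a i = -1 := (hapm i).resolve_left h
            rw [if_neg h, if_neg (by decide : ¬(1 : ZMod 2) = 0), ham]
        rw [Finset.prod_congr rfl (fun i _ => key i), ha1]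
      · intro v
        show ε v = if a (part v) = 1 then (0 : ZMod 2) else 1
        have hv := haval v
        by_cases h : ε v = 0
        · rw [if_pos h] at hv
          rw [h, if_pos hv]
        · rw [if_neg h] at hv
          have h1 : ε v = 1 := by
            have := (by decide : ∀ x : ZMod 2, x = 0 ∨ x = 1) (ε v)
            tauto
          have : ¬ a (part v) = 1 := by rw [hv]; norm_num
          rw [h1, if_neg this]
  · -- both cokernel conditions imply global rigidity
    rintro ⟨hPR, hP2⟩ q hq
    -- every vertex lies in some edge
    have hcover : ∀ v, ∃ e, v ∈ edge e := by
      intro v0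
      by_contra h
      push_neg at h
      obtain ⟨c, hc0, hc⟩ := hPR (fun v => if v = v0 then 1 else 0) (by
        intro e
        exact Finset.sum_eq_zero fun v hv => if_neg (fun h' => h e (by rw [← h']; exact hv)))
      have h1 : c (part v0) = 1 := by
        have := hc v0; rw [if_pos rfl] at this; exact this.symm
      have h2 : ∀ i ∈ Finset.univ, i ≠ part v0 → c i = 0 := by
        intro i _ hi
        obtain ⟨w, rfl⟩ := hpart i
        have hwv : w ≠ v0 := fun h' => hi (by rw [h'])
        have := hc w; rw [if_neg hwv] at this; exact this.symm
      have hsum : ∑ i, c i = c (part v0) :=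
        Finset.sum_eq_single _ h2 (fun h => absurd (Finset.mem_univ _) h)
      rw [hc0, h1] at hsum
      exact one_ne_zero hsum.symm
    have hprodp : ∀ e, ∏ v ∈ edge e, p v ≠ 0 :=
      fun e => Finset.prod_ne_zero_iff.mpr fun v _ => hp0 v
    have hq0 : ∀ v, q v ≠ 0 := by
      intro v
      obtain ⟨e, he⟩ := hcover v
      intro h0
      exact hprodp e (by rw [← hq e]; exact Finset.prod_eq_zero he h0)
    set r : V → ℝ := fun v => q v / p v with hrdef
    have hr0 : ∀ v, r v ≠ 0 := fun v => div_ne_zero (hq0 v) (hp0 v)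
    have hre : ∀ e, ∏ v ∈ edge e, r v = 1 := by
      intro e
      rw [hrdef]
      rw [Finset.prod_div_distrib, hq e, div_self (hprodp e)]
    have habs : ∀ e, ∏ v ∈ edge e, |r v| = 1 := by
      intro e
      rw [← Finset.abs_prod, hre e, abs_one]
    -- magnitudes
    obtain ⟨c, hc0, hcx⟩ := hPR (fun v => Real.log |r v|) (by
      intro e
      rw [← Real.log_prod (fun v _ => abs_ne_zero.mpr (hr0 v)), habs e, Real.log_one])
    -- signs
    set ε : V → ZMod 2 := fun v => if 0 < r v then 0 else 1 with hεdef
    have hsign : ∀ v, (if ε v = 0 then (1 : ℝ) else -1) = if 0 < r v then 1 else -1 := by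
      intro v
      by_cases h : 0 < r v <;> simp [hεdef, h]
    have hrd : ∀ v, r v = (if ε v = 0 then (1 : ℝ) else -1) * |r v| := by
      intro v
      rw [hsign]
      by_cases h : 0 < r v
      · rw [if_pos h, one_mul, abs_of_pos h]
      · have hlt : r v < 0 := lt_of_le_of_ne (not_lt.mp h) (hr0 v)
        rw [if_neg h, abs_of_neg hlt]; ring
    obtain ⟨d, hd0, hdx⟩ := hP2 ε (by
      intro e
      apply (sign_prod_eq_one_iff _ ε).1
      have : (∏ v ∈ edge e, (if ε v = 0 then (1 : ℝ) else -1)) * ∏ v ∈ edge e, |r v| = 1 := by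
        rw [← Finset.prod_mul_distrib,
          Finset.prod_congr rfl (fun v _ => (hrd v).symm), hre e]
      rw [habs e, mul_one] at this
      exact this)
    refine ⟨fun i => (if d i = 0 then (1 : ℝ) else -1) * Real.exp (c i), ?_, ?_⟩
    · rw [Finset.prod_mul_distrib, (sign_prod_eq_one_iff univ d).2 hd0, one_mul,
        ← Real.exp_sum, hc0, Real.exp_zero]
    · intro v
      have habse : |r v| = Real.exp (c (part v)) := by
        rw [← Real.exp_log (abs_pos.mpr (hr0 v)), hcx v]
      have hqv : q v = r v * p v := by
        rw [hrdef]
        exact (div_mul_cancel₀ (q v) (hp0 v)).symm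
      show q v = (if d (part v) = 0 then (1 : ℝ) else -1) * Real.exp (c (part v)) * p v
      rw [hqv, hrd v, hdx v, habse]
end

section
/- Let G be a k-partite k-uniform hypergraph on N vertices with vertex classes V_1,...,V_k, let p ∈ (F^d)^N be any point configuration, and let ω: E(G) → F be in the left kernel of the Jacobian Jf_G^d(p) of the d-dimensional rigidity map. Then for each j ∈ {1,...,k}, the vector y_j ∈ F^N defined by (y_j)_v = p_{v,1} for v ∈ V_j and 0 otherwise lies in the kernel of the first coordinated adjacency matrix A_ω^1. In particular, dim(∩_ω ker A_ω^1) ≥ k when the y_j are linearly independent. -/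
/-- Let G be a k-partite k-uniform hypergraph on N vertices, p a
d-dimensional configuration, and ω an edge weight in the left kernel of the Jacobian
of the d-dimensional rigidity map. Then each vector y_j (equal to the first coordinate
p_{v,1} on the class V_j and 0 elsewhere) lies in the kernel of the first coordinated
adjacency matrix A_ω^1; in particular, if the y_j are linearly independent then the
common kernel of all such A_ω^1 has dimension at least k. -/
theorem stmt_8 {F : Type*} [Field F] {k d : ℕ} (hd : 0 < d)
    (V E : Type*) [Fintype V] [Fintype E] [DecidableEq V]
    (part : V → Fin k) (edge : E → Finset V)
    (huniform : ∀ (e : E) (i : Fin k), ∃! v, v ∈ edge e ∧ part v = i)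
    (p : V → Fin d → F)
    (A : (E → F) → Matrix V V F)
    (hA : ∀ ω u w, A ω u w = if u = w then 0 else
      ∑ e ∈ Finset.univ.filter (fun e => u ∈ edge e ∧ w ∈ edge e),
        ω e * ∏ v ∈ ((edge e).erase u).erase w, p v ⟨0, hd⟩)
    (y : Fin k → V → F)
    (hy : ∀ j v, y j v = if part v = j then p v ⟨0, hd⟩ else 0)
    (LK : (E → F) → Prop)
    (hLK : ∀ ω, LK ω ↔ ∀ (u : V) (c : Fin d),
      ∑ e ∈ Finset.univ.filter (fun e => u ∈ edge e),
        ω e * ∏ w ∈ (edge e).erase u, p w c = 0) :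
    (∀ ω, LK ω → ∀ j, (A ω).mulVec (y j) = 0) ∧
      (LinearIndependent F y →
        (k : ℕ) ≤ Module.finrank F
          ↥(⨅ ω ∈ {ω : E → F | LK ω}, LinearMap.ker (Matrix.mulVecLin (A ω)))) := by
  classical
  set c0 : Fin d := ⟨0, hd⟩ with hc0
  have main : ∀ ω, LK ω → ∀ j, (A ω).mulVec (y j) = 0 := by
    intro ω hω j
    funext u
    show ∑ w, A ω u w * y j w = 0
    -- rewrite each term as a sum over edges
    have step1 : ∀ w, A ω u w * y j w =
        ∑ e, (if u ≠ w ∧ u ∈ edge e ∧ w ∈ edge e ∧ part w = j then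
          ω e * ((∏ v ∈ ((edge e).erase u).erase w, p v c0) * p w c0) else 0) := by
      intro w
      rw [hA, hy]
      by_cases huw : u = w
      · simp [huw]
      · by_cases hpw : part w = j
        · simp only [if_neg huw, if_pos hpw]
          rw [Finset.sum_mul, Finset.sum_filter]
          refine Finset.sum_congr rfl fun e _ => ?_
          by_cases he : u ∈ edge e ∧ w ∈ edge e
          · simp [he, huw, hpw, mul_assoc]
          · simp only [if_neg he]
            rw [if_neg]
            rintro ⟨_, h1, h2, _⟩
            exact he ⟨h1, h2⟩
        · simp [huw, hpw]
    rw [Finset.sum_congr rfl fun w _ => step1 w, Finset.sum_comm]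
    -- now handle each edge
    have step2 : ∀ e : E,
        (∑ w, if u ≠ w ∧ u ∈ edge e ∧ w ∈ edge e ∧ part w = j then
          ω e * ((∏ v ∈ ((edge e).erase u).erase w, p v c0) * p w c0) else 0)
        = if u ∈ edge e ∧ part u ≠ j then ω e * ∏ v ∈ (edge e).erase u, p v c0 else 0 := by
      intro e
      by_cases hu : u ∈ edge e
      · obtain ⟨w0, ⟨hw0e, hw0p⟩, hw0u⟩ := huniform e j
        by_cases hpu : part u = j
        · have heq : u = w0 := hw0u u ⟨hu, hpu⟩
          subst heq
          rw [if_neg (by simp [hpu])]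
          refine Finset.sum_eq_zero fun w _ => ?_
          rw [if_neg]
          rintro ⟨h1, _, h3, h4⟩
          exact h1 (hw0u w ⟨h3, h4⟩).symm
        · rw [if_pos ⟨hu, hpu⟩]
          have hw0ne : u ≠ w0 := fun h => hpu (h ▸ hw0p)
          rw [Finset.sum_eq_single w0]
          · rw [if_pos ⟨hw0ne, hu, hw0e, hw0p⟩]
            congr 1
            have hmem : w0 ∈ (edge e).erase u :=
              Finset.mem_erase.mpr ⟨fun h => hw0ne h.symm, hw0e⟩
            rw [mul_comm]
            exact Finset.mul_prod_erase _ (fun v => p v c0) hmem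
          · intro w _ hw
            rw [if_neg]
            rintro ⟨_, _, h3, h4⟩
            exact hw (hw0u w ⟨h3, h4⟩)
          · intro h; exact absurd (Finset.mem_univ w0) h
      · refine Eq.trans (Finset.sum_eq_zero fun w _ => ?_) ?_
        · rw [if_neg]; rintro ⟨_, h2, _⟩; exact hu h2
        · rw [if_neg]; rintro ⟨h1, _⟩; exact hu h1
    rw [Finset.sum_congr rfl fun e _ => step2 e]
    by_cases hpu : part u = j
    · exact Finset.sum_eq_zero fun e _ => if_neg (by simp [hpu])
    · have hLKu := (hLK ω).mp hω u c0
      rw [Finset.sum_filter] at hLKu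
      calc (∑ e, if u ∈ edge e ∧ part u ≠ j then ω e * ∏ v ∈ (edge e).erase u, p v c0 else 0)
          = ∑ e, if u ∈ edge e then ω e * ∏ v ∈ (edge e).erase u, p v c0 else 0 :=
            Finset.sum_congr rfl fun e _ => by by_cases hu : u ∈ edge e <;> simp [hu, hpu]
        _ = 0 := hLKu
  refine ⟨main, fun li => ?_⟩
  set S := ⨅ ω ∈ {ω : E → F | LK ω}, LinearMap.ker (Matrix.mulVecLin (A ω)) with hS
  have hmem : ∀ j, y j ∈ S := by
    intro j
    simp only [hS, Submodule.mem_iInf]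
    intro ω hω
    rw [LinearMap.mem_ker, Matrix.mulVecLin_apply]
    exact main ω hω j
  have hle : Submodule.span F (Set.range y) ≤ S :=
    Submodule.span_le.mpr (Set.range_subset_iff.mpr hmem)
  calc (k : ℕ) = Fintype.card (Fin k) := (Fintype.card_fin k).symm
    _ = Module.finrank F (Submodule.span F (Set.range y)) := (finrank_span_eq_card li).symm
    _ ≤ Module.finrank F S := Submodule.finrank_mono hle
end

section
/- Let G_0 ⊆ K be a k-partite k-graph on N vertices with rank(I_{G_0}) = |E(G_0)| = N-(k-1), and let {ω_e} be a canonical cycle basis with respect to G_0 (with ω_e = 0 for e ∈ E(G_0)). Then for any G with G_0 ⊆ G ⊆ K, the linear span of the images of the adjacency matrices A_{ω_e} over e ∈ E(G) equals the linear span of the images of A_ω over all ω ∈ ker I_G. In particular, if this span has dimension N-k, then the common kernel ∩_{ω ∈ ker I_G} ker A_ω has dimension k. -/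
/-- Let K be the complete k-partite k-uniform hypergraph on N vertices,
G_0 ⊆ K with rank(I_{G_0}) = |E(G_0)| = N-(k-1), and {ω_e} a canonical cycle basis with
respect to G_0 (ω_e = 0 for e ∈ E(G_0)).  For a hypergraph G with G_0 ⊆ G ⊆ K (edge
set EG), the span of the images of the adjacency matrices A_{ω_e} over e ∈ EG equals
the span of the images of A_ω over all ω ∈ ker I_G; in particular, if this span has
dimension N-k then the common kernel ∩_{ω ∈ ker I_G} ker A_ω has dimension k. -/
theorem stmt_10 {k : ℕ} (F : Type*) [Field F] (V EK : Type*)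
    [Fintype V] [Fintype EK] [DecidableEq V] [DecidableEq EK]
    (part : V → Fin k) (hpart : Function.Surjective part)
    (edge : EK → Finset V)
    (huniform : ∀ (e : EK) (i : Fin k), ∃! v, v ∈ edge e ∧ part v = i)
    (hcomplete : ∀ S : Finset V, (∀ i : Fin k, ∃! v, v ∈ S ∧ part v = i) →
      ∃! e : EK, edge e = S)
    (I : Matrix V EK F) (hI : ∀ v e, I v e = if v ∈ edge e then 1 else 0)
    (E0 : Finset EK)
    (hE0indep : LinearIndependent F (fun (f : ↥E0) => (fun v => I v (f : EK))))
    (hE0card : E0.card = Fintype.card V - (k - 1))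
    (ωc : EK → EK → F)
    (hωc0 : ∀ e ∈ E0, ωc e = 0)
    (hωcne : ∀ e ∉ E0, ωc e ≠ 0)
    (hωcsupp : ∀ e ∉ E0, ∀ f : EK, f ∉ E0 → f ≠ e → ωc e f = 0)
    (hωcker : ∀ e ∉ E0, I.mulVec (ωc e) = 0)
    (A : (EK → F) → Matrix V V F)
    (hA : ∀ ω u w, A ω u w = if u = w then 0 else
      ∑ e ∈ Finset.univ.filter (fun e => u ∈ edge e ∧ w ∈ edge e), ω e)
    (EG : Finset EK) (hE0G : E0 ⊆ EG) :
    (⨆ e ∈ EG, LinearMap.range (Matrix.mulVecLin (A (ωc e))))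
        = (⨆ ω ∈ {ω : EK → F | (∀ f ∉ EG, ω f = 0) ∧ I.mulVec ω = 0},
            LinearMap.range (Matrix.mulVecLin (A ω))) ∧
      (Module.finrank F ↥(⨆ e ∈ EG, LinearMap.range (Matrix.mulVecLin (A (ωc e))))
          = Fintype.card V - k →
        Module.finrank F ↥(⨅ ω ∈ {ω : EK → F | (∀ f ∉ EG, ω f = 0) ∧ I.mulVec ω = 0},
            LinearMap.ker (Matrix.mulVecLin (A ω))) = k) := by
  classical
  set S : Set (EK → F) := {ω : EK → F | (∀ f ∉ EG, ω f = 0) ∧ I.mulVec ω = 0} with hSdef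
  -- a kernel element supported on E0 is zero
  have hzero : ∀ ω : EK → F, I.mulVec ω = 0 → (∀ f ∉ E0, ω f = 0) → ω = 0 := by
    intro ω hk hs
    have h := Fintype.linearIndependent_iff.mp hE0indep (fun f : ↥E0 => ω f)
    have hsum : (∑ f : ↥E0, ω (f : EK) • (fun v => I v (f : EK))) = 0 := by
      funext v
      have h1 : (∑ f : ↥E0, ω (f : EK) • (fun v => I v (f : EK))) v
          = ∑ f : ↥E0, ω (f : EK) * I v (f : EK) := by
        simp [Finset.sum_apply]
      rw [h1]
      have h2 : ∑ f : ↥E0, ω (f : EK) * I v (f : EK)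
          = ∑ e ∈ E0, ω e * I v e := by
        exact Finset.sum_coe_sort E0 (fun e => ω e * I v e)
      have h3 : ∑ e ∈ E0, ω e * I v e = ∑ e : EK, ω e * I v e := by
        apply Finset.sum_subset (Finset.subset_univ _)
        intro e _ he
        rw [hs e he, zero_mul]
      have h4 : ∑ e : EK, ω e * I v e = I.mulVec ω v := by
        simp [Matrix.mulVec, dotProduct, mul_comm]
      rw [h2, h3, h4, hk]
    funext f
    by_cases hf : f ∈ E0
    · exact h hsum ⟨f, hf⟩
    · exact hs f hf
  -- diagonal entries of the cycle basis are nonzero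
  have hdiag : ∀ e ∉ E0, ωc e e ≠ 0 := by
    intro e he hc
    apply hωcne e he
    apply hzero _ (hωcker e he)
    intro f hf
    by_cases hfe : f = e
    · subst hfe; exact hc
    · exact hωcsupp e he f hf hfe
  -- ωc e ∈ S for e ∈ EG
  have hmemS : ∀ e ∈ EG, ωc e ∈ S := by
    intro e he
    by_cases he0 : e ∈ E0
    · rw [hωc0 e he0]
      exact ⟨fun f _ => rfl, Matrix.mulVec_zero I⟩
    · refine ⟨fun f hf => ?_, hωcker e he0⟩
      have hf0 : f ∉ E0 := fun h => hf (hE0G h)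
      exact hωcsupp e he0 f hf0 (fun h => hf (h ▸ he))
  -- every element of S is a combination of the ωc e, e ∈ EG \ E0
  have hrep : ∀ ω ∈ S, ω = fun f => ∑ e ∈ EG \ E0, (ω e / ωc e e) * ωc e f := by
    rintro ω ⟨hsupp, hker⟩
    have key : (fun f => ω f - ∑ e ∈ EG \ E0, (ω e / ωc e e) * ωc e f) = 0 := by
      apply hzero
      · have hg : (fun f => ∑ e ∈ EG \ E0, (ω e / ωc e e) * ωc e f)
            = ∑ e ∈ EG \ E0, (ω e / ωc e e) • ωc e := by
          funext f; simp [Finset.sum_apply]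
        have : (fun f => ω f - ∑ e ∈ EG \ E0, (ω e / ωc e e) * ωc e f)
            = ω - ∑ e ∈ EG \ E0, (ω e / ωc e e) • ωc e := by
          funext f; simp [hg.symm]
        rw [this]
        have hmv : I.mulVec (∑ e ∈ EG \ E0, (ω e / ωc e e) • ωc e) = 0 := by
          have hmv' : I.mulVecLin (∑ e ∈ EG \ E0, (ω e / ωc e e) • ωc e) = 0 := by
            rw [map_sum]
            apply Finset.sum_eq_zero
            intro e he
            have he0 : e ∉ E0 := (Finset.mem_sdiff.mp he).2
            rw [map_smul, Matrix.mulVecLin_apply, hωcker e he0, smul_zero]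
          exact hmv'
        rw [Matrix.mulVec_sub, hker, hmv, sub_self]
      · intro f hf0
        by_cases hfG : f ∈ EG
        · have hfmem : f ∈ EG \ E0 := Finset.mem_sdiff.mpr ⟨hfG, hf0⟩
          have hsum : ∑ e ∈ EG \ E0, (ω e / ωc e e) * ωc e f
              = (ω f / ωc f f) * ωc f f := by
            apply Finset.sum_eq_single_of_mem f hfmem
            intro e he hef
            have he0 : e ∉ E0 := (Finset.mem_sdiff.mp he).2
            rw [hωcsupp e he0 f hf0 (Ne.symm hef), mul_zero]
          simp only [hsum, div_mul_cancel₀ _ (hdiag f hf0), sub_self]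
        · have h1 : ω f = 0 := hsupp f hfG
          have h2 : ∑ e ∈ EG \ E0, (ω e / ωc e e) * ωc e f = 0 := by
            apply Finset.sum_eq_zero
            intro e he
            have he0 : e ∉ E0 := (Finset.mem_sdiff.mp he).2
            have hef : f ≠ e := fun h => hfG (h ▸ (Finset.mem_sdiff.mp he).1)
            rw [hωcsupp e he0 f (fun h => hfG (hE0G h)) hef, mul_zero]
          simp [h1, h2]
    funext f
    have := congrFun key f
    simpa [sub_eq_zero] using this
  -- symmetry of A
  have hsym : ∀ (ω : EK → F) (u w : V), A ω u w = A ω w u := by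
    intro ω u w
    rw [hA, hA]
    by_cases h : u = w
    · simp [h]
    · rw [if_neg h, if_neg (Ne.symm h)]
      apply Finset.sum_congr _ (fun _ _ => rfl)
      ext e; simp [and_comm]
  -- linearity of A on combinations of the ωc
  have hAmat : ∀ (c : EK → F) (s : Finset EK),
      A (fun f => ∑ e ∈ s, c e * ωc e f) = ∑ e ∈ s, c e • A (ωc e) := by
    intro c s
    ext u w
    rw [Matrix.sum_apply]
    simp only [Matrix.smul_apply, smul_eq_mul, hA]
    by_cases h : u = w
    · simp [h]
    · simp only [if_neg h]
      rw [Finset.sum_comm]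
      exact Finset.sum_congr rfl fun e _ => (Finset.mul_sum _ _ _).symm
  -- sums of matrices act as sums on vectors
  have hmsum : ∀ (s : Finset EK) (g : EK → Matrix V V F) (y : V → F),
      Matrix.mulVec (∑ e ∈ s, g e) y = ∑ e ∈ s, Matrix.mulVec (g e) y := by
    intro s g y
    induction s using Finset.induction_on with
    | empty => simp
    | insert a s h ih => simp [Finset.sum_insert h, Matrix.add_mulVec, ih]
  -- the span equality
  have hspan : (⨆ e ∈ EG, LinearMap.range (Matrix.mulVecLin (A (ωc e))))
      = (⨆ ω ∈ S, LinearMap.range (Matrix.mulVecLin (A ω))) := by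
    apply le_antisymm
    · exact iSup₂_le fun e he => le_iSup₂_of_le (ωc e) (hmemS e he) le_rfl
    · apply iSup₂_le
      intro ω hω
      rintro x ⟨y, rfl⟩
      have hrepω := hrep ω hω
      have hAω : A ω = ∑ e ∈ EG \ E0, (ω e / ωc e e) • A (ωc e) := by
        conv_lhs => rw [hrepω]
        exact hAmat _ _
      have hval : Matrix.mulVecLin (A ω) y
          = ∑ e ∈ EG \ E0, (ω e / ωc e e) • (Matrix.mulVecLin (A (ωc e)) y) := by
        rw [Matrix.mulVecLin_apply, hAω, hmsum]
        exact Finset.sum_congr rfl fun e _ => Matrix.smul_mulVec _ _ _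
      rw [hval]
      apply Submodule.sum_mem
      intro e he
      have heG : e ∈ EG := (Finset.mem_sdiff.mp he).1
      apply Submodule.smul_mem
      exact Submodule.mem_iSup_of_mem e (Submodule.mem_iSup_of_mem heG ⟨y, rfl⟩)
  refine ⟨hspan, ?_⟩
  intro hdim
  -- the standard bilinear (dot product) form
  set B : LinearMap.BilinForm F (V → F) :=
    LinearMap.mk₂ F (fun x y => dotProduct x y)
      (fun x x' y => add_dotProduct x x' y)
      (fun c x y => smul_dotProduct c x y)
      (fun x y y' => dotProduct_add x y y')
      (fun c x y => dotProduct_smul c x y) with hBdef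
  have hBapp : ∀ x y : V → F, B x y = dotProduct x y := fun x y => rfl
  have hBrefl : B.IsRefl := by
    intro x y h
    rw [hBapp, dotProduct_comm]
    exact h
  have hBnd : B.Nondegenerate := by
    refine (LinearMap.IsRefl.nondegenerate_iff_separatingLeft hBrefl).mpr ?_
    intro x hx
    funext v
    have := hx (Pi.single v 1)
    rw [hBapp, dotProduct_single, mul_one] at this
    simpa using this
  -- the common kernel is the orthogonal complement of the span of the images
  have hperp : (⨅ ω ∈ S, LinearMap.ker (Matrix.mulVecLin (A ω)))
      = B.orthogonal (⨆ ω ∈ S, LinearMap.range (Matrix.mulVecLin (A ω))) := by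
    ext x
    simp only [Submodule.mem_iInf, LinearMap.mem_ker]
    constructor
    · intro h
      have hsub : (⨆ ω ∈ S, LinearMap.range (Matrix.mulVecLin (A ω)))
          ≤ LinearMap.ker (B.flip x) := by
        apply iSup₂_le
        intro ω hω
        rintro n ⟨y, rfl⟩
        simp only [LinearMap.mem_ker, LinearMap.flip_apply]
        show dotProduct (Matrix.mulVec (A ω) y) x = 0
        have hAT : (A ω).transpose = A ω := by
          ext u w
          rw [Matrix.transpose_apply]
          exact hsym ω w u
        have hx0 : Matrix.mulVec (A ω) x = 0 := h ω hω
        rw [dotProduct_comm, Matrix.dotProduct_mulVec, ← Matrix.mulVec_transpose,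
          hAT, hx0, zero_dotProduct]
      exact fun n hn => hsub hn
    · intro h ω hω
      funext v
      have hn : Matrix.mulVecLin (A ω) (Pi.single v 1)
          ∈ (⨆ ω ∈ S, LinearMap.range (Matrix.mulVecLin (A ω))) :=
        Submodule.mem_iSup_of_mem ω (Submodule.mem_iSup_of_mem hω ⟨_, rfl⟩)
      have h0 := h _ hn
      have hrow : Matrix.mulVecLin (A ω) (Pi.single v 1) = fun w => A ω v w := by
        funext w
        rw [Matrix.mulVecLin_apply, Matrix.mulVec_single]
        simp only [Pi.smul_apply, Matrix.col_apply, op_smul_eq_mul]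
        rw [mul_one]
        exact hsym ω w v
      show dotProduct (fun w => A ω v w) x = 0
      rw [← hrow]
      exact h0
  have hk : k ≤ Fintype.card V := by
    simpa using Fintype.card_le_of_surjective part hpart
  rw [hperp, LinearMap.BilinForm.finrank_orthogonal hBnd _, ← hspan, hdim,
    Module.finrank_pi]
  omega
end

section
/- For the complete k-partite k-graph K with classes V_1 = {v_{1,1}, v_{1,2}}, V_2 = {v_{2,1}, v_{2,2}}, and singleton classes V_3,...,V_k, the edge weight ω assigning +1 to edges (v_{1,1},v_{2,1},v_3,...,v_k) and (v_{1,2},v_{2,2},v_3,...,v_k) and -1 to the other two edges lies in the kernel of the incidence matrix, and the corresponding adjacency matrix A_ω has rank 2 = N - k (where N = k+2). -/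
/-- The vertex set of K_{(2,2,1,...,1)}^k: two classes of size 2 and k-2 singleton
classes; N = k+2 vertices (for k ≥ 2). -/
abbrev KVert (k : ℕ) := Fin 2 ⊕ Fin 2 ⊕ Fin (k - 2)

/-- The edges of K_{(2,2,1,...,1)}^k, indexed by the choice of a vertex in each of the
two classes of size 2; the edge contains those two vertices and all singleton-class
vertices. -/
def KEdge (k : ℕ) (ab : Fin 2 × Fin 2) : Finset (KVert k) :=
  insert (Sum.inl ab.1) (insert (Sum.inr (Sum.inl ab.2))
    (Finset.univ.image fun j : Fin (k - 2) => Sum.inr (Sum.inr j)))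

@[simp] lemma mem_KEdge_inl {k : ℕ} (a : Fin 2) (ab : Fin 2 × Fin 2) :
    (Sum.inl a : KVert k) ∈ KEdge k ab ↔ a = ab.1 := by
  simp [KEdge]

@[simp] lemma mem_KEdge_inrl {k : ℕ} (b : Fin 2) (ab : Fin 2 × Fin 2) :
    (Sum.inr (Sum.inl b) : KVert k) ∈ KEdge k ab ↔ b = ab.2 := by
  simp [KEdge]

@[simp] lemma mem_KEdge_inrr {k : ℕ} (j : Fin (k - 2)) (ab : Fin 2 × Fin 2) :
    (Sum.inr (Sum.inr j) : KVert k) ∈ KEdge k ab := by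
  simp [KEdge]

/-- For K_{(2,2,1,...,1)}^k, the edge weight ω assigning +1 to the edges
(v_{1,1},v_{2,1},v_3,...,v_k) and (v_{1,2},v_{2,2},v_3,...,v_k) and -1 to the other
two edges lies in the kernel of the incidence matrix, and the corresponding adjacency
matrix A_ω has rank 2 = N - k, where N = k + 2. -/
theorem stmt_12 (F : Type*) [Field F] [CharZero F] (k : ℕ) (hk : 2 ≤ k) :
    let ω : Fin 2 × Fin 2 → F := fun ab => if ab.1 = ab.2 then 1 else -1
    let I : Matrix (KVert k) (Fin 2 × Fin 2) F :=
      Matrix.of fun v e => if v ∈ KEdge k e then 1 else 0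
    let A : Matrix (KVert k) (KVert k) F :=
      Matrix.of fun u w => if u = w then 0 else
        ∑ e ∈ Finset.univ.filter (fun e => u ∈ KEdge k e ∧ w ∈ KEdge k e), ω e
    I.mulVec ω = 0 ∧ A.rank = 2 ∧ Fintype.card (KVert k) = k + 2 := by
  intro ω I A
  -- auxiliary vectors
  set f : KVert k → F := fun v =>
    match v with
    | Sum.inl a => if a = 0 then 1 else -1
    | _ => 0 with hf
  set g : KVert k → F := fun v =>
    match v with
    | Sum.inr (Sum.inl b) => if b = 0 then 1 else -1
    | _ => 0 with hg
  have hAentry : ∀ u w, A u w = f u * g w + g u * f w := by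
    intro u w
    show (if u = w then 0 else ∑ e ∈ Finset.univ.filter
        (fun e => u ∈ KEdge k e ∧ w ∈ KEdge k e), ω e) = _
    rcases u with a | b | j <;> rcases w with a' | b' | j' <;>
      simp only [Finset.sum_filter, Fintype.sum_prod_type, Fin.sum_univ_two,
        mem_KEdge_inl, mem_KEdge_inrl, mem_KEdge_inrr, hf, hg, ω,
        Sum.inl.injEq, Sum.inr.injEq, Sum.inl_ne_inr, Sum.inr_ne_inl,
        Fin.ext_iff] <;>
      first
      | (fin_cases a <;> fin_cases a' <;> norm_num)
      | (fin_cases a <;> fin_cases b' <;> norm_num)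
      | (fin_cases a <;> norm_num)
      | (fin_cases b <;> fin_cases a' <;> norm_num)
      | (fin_cases b <;> fin_cases b' <;> norm_num)
      | (fin_cases b <;> norm_num)
      | (fin_cases a' <;> norm_num)
      | (fin_cases b' <;> norm_num)
      | (by_cases h : j = j' <;> simp [h])
  refine ⟨?_, ?_, ?_⟩
  · funext v
    show ∑ e, I v e * ω e = 0
    rcases v with a | b | j <;>
      simp only [Fintype.sum_prod_type, Fin.sum_univ_two, I, Matrix.of_apply,
        mem_KEdge_inl, mem_KEdge_inrl, mem_KEdge_inrr, ω] <;>
      first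
      | (fin_cases a <;> norm_num)
      | (fin_cases b <;> norm_num)
      | norm_num
  · -- rank = 2
    set B : Matrix (KVert k) (Fin 2) F :=
      Matrix.of fun v i => if i = 0 then f v else g v with hB
    set C : Matrix (Fin 2) (KVert k) F :=
      Matrix.of fun i w => if i = 0 then g w else f w with hC
    have hABC : A = B * C := by
      ext u w
      rw [hAentry u w]
      simp [hB, hC, Matrix.mul_apply, Fin.sum_univ_two]
    have h_le : A.rank ≤ 2 := by
      rw [hABC]
      exact (Matrix.rank_mul_le_left B C).trans
        (B.rank_le_card_width.trans_eq (by simp))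
    have hgmem : g ∈ LinearMap.range A.mulVecLin := by
      refine ⟨Pi.single (Sum.inl 0) 1, ?_⟩
      rw [Matrix.mulVecLin_apply, Matrix.mulVec_single]
      funext u
      show A u (Sum.inl 0) * 1 = g u
      rw [hAentry u (Sum.inl 0)]
      simp [hf, hg]
    have hfmem : f ∈ LinearMap.range A.mulVecLin := by
      refine ⟨Pi.single (Sum.inr (Sum.inl 0)) 1, ?_⟩
      rw [Matrix.mulVecLin_apply, Matrix.mulVec_single]
      funext u
      show A u (Sum.inr (Sum.inl 0)) * 1 = f u
      rw [hAentry u (Sum.inr (Sum.inl 0))]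
      simp [hf, hg]
    have hli : LinearIndependent F ![g, f] := by
      rw [LinearIndependent.pair_iff]
      intro s t h
      have h1 := congrFun h (Sum.inr (Sum.inl 0))
      have h2 := congrFun h (Sum.inl 0)
      simp [hf, hg] at h1 h2
      exact ⟨h1, h2⟩
    have h_ge : 2 ≤ A.rank := by
      have hspan : Submodule.span F (Set.range ![g, f]) ≤ LinearMap.range A.mulVecLin := by
        rw [Submodule.span_le]
        rintro x ⟨i, rfl⟩
        fin_cases i
        · exact hgmem
        · exact hfmem
      have := Submodule.finrank_mono hspan
      rwa [finrank_span_eq_card hli, Fintype.card_fin] at this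
    exact le_antisymm h_le h_ge
  · have : Fintype.card (Fin (k - 2)) = k - 2 := Fintype.card_fin _
    simp only [Fintype.card_sum, Fintype.card_fin]
    omega
end

section
/- Let Δ be a collection of subsets of V_1 ∪ ... ∪ V_k with |V_i| = n, and for I ⊆ {1,...,k} with |I| = i, let Δ_I^{(t)} be defined recursively as in the contact-family construction. Fix 0 < t < 1 and constants δ_k, with δ_i = k·δ_{i+1}/t for i < k. If |Δ_{{1,...,k}}^{(t)}| ≥ (1-δ_k)n^k and δ_0 < 1, then for every I ⊆ {1,...,k}, |Δ_I^{(t)}| ≥ (1 - δ_{|I|}) n^{|I|}. -/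
open Finset Function

lemma pair_count {k n : ℕ} (j : Fin k) (C : Finset (Fin k → Fin n)) :
    ∑ f : Fin k → Fin n, (Finset.univ.filter (fun v : Fin n => Function.update f j v ∈ C)).card
      = C.card * n := by
  classical
  have h1 : ∑ f : Fin k → Fin n,
      (Finset.univ.filter (fun v : Fin n => Function.update f j v ∈ C)).card
      = ((Finset.univ ×ˢ Finset.univ : Finset ((Fin k → Fin n) × Fin n)).filter
          (fun p => Function.update p.1 j p.2 ∈ C)).card := by
    rw [Finset.card_filter, Finset.sum_product]
    exact Finset.sum_congr rfl fun f _ => Finset.card_filter _ _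
  rw [h1]
  have h2 : C.card * n = (C ×ˢ (Finset.univ : Finset (Fin n))).card := by
    simp [Finset.card_product]
  rw [h2]
  have hupd : ∀ (g : Fin k → Fin n) (w : Fin n),
      Function.update (Function.update g j w) j (g j) = g := by
    intro g w
    funext x
    by_cases hx : x = j <;> simp [Function.update, hx]
  refine Finset.card_nbij' (fun p => (Function.update p.1 j p.2, p.1 j))
    (fun q => (Function.update q.1 j q.2, q.1 j)) ?_ ?_ ?_ ?_
  · intro p hp
    simp only [Finset.mem_coe, Finset.mem_filter] at hp
    simp [Finset.mem_product, hp.2]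
  · intro q hq
    simp only [Finset.mem_coe, Finset.mem_product] at hq
    simp only [Finset.mem_coe, Finset.mem_filter, Finset.mem_product, Finset.mem_univ, true_and]
    rw [hupd]
    exact hq.1
  · intro p hp
    simp [hupd]
  · intro q hq
    simp [hupd]

/-- counting lemma for the contact-family construction. Partial
transversals on I ⊆ {1,...,k} are encoded as total functions Fin k → Fin n whose
membership in Δ I depends only on the values on I; then |Δ_I^{(t)}| ≥ (1-δ_{|I|})n^{|I|}
translates to (1 - δ |I|)·n^k ≤ |Δ I| (each partial transversal corresponding to
n^{k-|I|} total functions). Δ univ is given; for I ⊊ {1,...,k}, f ∈ Δ I iff for every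
j ∉ I at least (1-t)n values v have the updated function in Δ (insert j I). If
δ_i = kδ_{i+1}/t, δ_0 < 1 and (1-δ_k)n^k ≤ |Δ univ|, then (1-δ_{|I|})n^k ≤ |Δ I| for
all I. -/
theorem stmt_15 {k n : ℕ} (hn : 0 < n)
    (Δ : Finset (Fin k) → Finset (Fin k → Fin n))
    (t : ℝ) (ht0 : 0 < t) (ht1 : t < 1)
    (δ : ℕ → ℝ)
    (hδ : ∀ i < k, δ i = k * δ (i + 1) / t)
    (hδ0 : δ 0 < 1)
    (hbase : ((1 : ℝ) - δ k) * (n : ℝ) ^ k ≤ ((Δ Finset.univ).card : ℝ))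
    (hrec : ∀ I : Finset (Fin k), I ≠ Finset.univ → ∀ f : Fin k → Fin n,
      (f ∈ Δ I ↔ ∀ j ∉ I, ((1 : ℝ) - t) * n ≤
        ((Finset.univ.filter
          (fun v : Fin n => Function.update f j v ∈ Δ (insert j I))).card : ℝ))) :
    ∀ I : Finset (Fin k), ((1 : ℝ) - δ I.card) * (n : ℝ) ^ k ≤ ((Δ I).card : ℝ) := by
  classical
  have hNk : (Fintype.card (Fin k → Fin n)) = n ^ k := by
    simp [Fintype.card_fun]
  have hnk_pos : (0 : ℝ) < (n : ℝ) ^ k := by positivity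
  suffices h : ∀ m : ℕ, ∀ I : Finset (Fin k), k ≤ I.card + m →
      ((1 : ℝ) - δ I.card) * (n : ℝ) ^ k ≤ ((Δ I).card : ℝ) by
    intro I; exact h k I (by omega)
  intro m
  induction m with
  | zero =>
    intro I hI
    have hIcard : I.card = k := by
      have := Finset.card_le_univ I
      simp [Fintype.card_fin] at this
      omega
    have hIuniv : I = Finset.univ := Finset.eq_univ_of_card I (by simp [Fintype.card_fin, hIcard])
    rw [hIuniv, Finset.card_univ, Fintype.card_fin]
    exact hbase
  | succ m ih =>
    intro I hI
    by_cases hIu : I = Finset.univ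
    · rw [hIu, Finset.card_univ, Fintype.card_fin]; exact hbase
    · -- main step
      set i := I.card with hi
      have hik : i < k := by
        have h1 : I.card < Fintype.card (Fin k) :=
          Finset.card_lt_card (Finset.lt_iff_ssubset.mp
            (lt_of_le_of_ne (Finset.le_iff_subset.mpr (Finset.subset_univ I))
              (by simpa using hIu))) |>.trans_le (le_of_eq rfl)
        simpa [Fintype.card_fin] using h1
      have hδi : δ i = k * δ (i + 1) / t := hδ i hik
      -- bad set for each j ∉ I
      set Bj : Fin k → Finset (Fin k → Fin n) := fun j =>
        Finset.univ.filter (fun f =>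
          ¬ ((1 : ℝ) - t) * n ≤
            ((Finset.univ.filter
              (fun v : Fin n => Function.update f j v ∈ Δ (insert j I))).card : ℝ)) with hBj
      have key : ∀ j ∉ I, ((Bj j).card : ℝ) ≤ δ (i + 1) * (n : ℝ) ^ k / t := by
        intro j hj
        set J := insert j I with hJ
        have hJcard : J.card = i + 1 := Finset.card_insert_of_notMem hj
        have hIH : ((1 : ℝ) - δ (i + 1)) * (n : ℝ) ^ k ≤ ((Δ J).card : ℝ) := by
          have := ih J (by omega)
          rwa [hJcard] at this
        set C := (Finset.univ : Finset (Fin k → Fin n)) \ Δ J with hC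
        have hCcard : ((C.card : ℝ)) = (n : ℝ) ^ k - ((Δ J).card : ℝ) := by
          have h1 : C.card = n ^ k - (Δ J).card := by
            rw [hC, Finset.card_sdiff_of_subset (Finset.subset_univ _), Finset.card_univ, hNk]
          have h2 : (Δ J).card ≤ n ^ k := by
            have := Finset.card_le_univ (Δ J)
            rwa [hNk] at this
          rw [h1, Nat.cast_sub h2]
          push_cast
          ring
        have hCbound : ((C.card : ℝ)) ≤ δ (i + 1) * (n : ℝ) ^ k := by
          rw [hCcard]; nlinarith [hIH]
        -- for f ∈ Bj j, the bad fiber has size ≥ t n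
        have hfib : ∀ f ∈ Bj j, t * n ≤
            ((Finset.univ.filter (fun v : Fin n => Function.update f j v ∈ C)).card : ℝ) := by
          intro f hf
          rw [hBj, Finset.mem_filter] at hf
          have hlt : ((Finset.univ.filter
              (fun v : Fin n => Function.update f j v ∈ Δ J)).card : ℝ) < (1 - t) * n := by
            push_neg at hf
            exact hf.2
          have hsplit : (Finset.univ.filter
                (fun v : Fin n => Function.update f j v ∈ Δ J)).card
              + (Finset.univ.filter (fun v : Fin n => Function.update f j v ∈ C)).card = n := by
            have : ∀ v : Fin n, (Function.update f j v ∈ C) ↔ ¬ (Function.update f j v ∈ Δ J) := by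
              intro v; simp [hC]
            rw [Finset.filter_congr (fun v _ => this v),
              Finset.card_filter_add_card_filter_not]
            simp
          have := congrArg (fun x : ℕ => (x : ℝ)) hsplit
          push_cast at this
          linarith
        -- double counting
        have hsum : (∑ f : Fin k → Fin n,
            ((Finset.univ.filter (fun v : Fin n => Function.update f j v ∈ C)).card : ℝ))
            = (C.card : ℝ) * n := by
          rw [← Nat.cast_sum]
          rw [pair_count j C]
          push_cast; ring
        have hlower : t * n * ((Bj j).card : ℝ) ≤ (C.card : ℝ) * n := by
          calc t * n * ((Bj j).card : ℝ)
              = ∑ _f ∈ Bj j, t * n := by rw [Finset.sum_const]; push_cast; ring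
            _ ≤ ∑ f ∈ Bj j,
                ((Finset.univ.filter (fun v : Fin n => Function.update f j v ∈ C)).card : ℝ) :=
                Finset.sum_le_sum hfib
            _ ≤ ∑ f : Fin k → Fin n,
                ((Finset.univ.filter (fun v : Fin n => Function.update f j v ∈ C)).card : ℝ) := by
                apply Finset.sum_le_sum_of_subset_of_nonneg (Finset.subset_univ _)
                intro f _ _; positivity
            _ = (C.card : ℝ) * n := hsum
        have hnpos : (0 : ℝ) < n := by exact_mod_cast hn
        rw [le_div_iff₀ ht0]
        have hCb2 : (C.card : ℝ) * n ≤ δ (i + 1) * (n : ℝ) ^ k * n :=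
          mul_le_mul_of_nonneg_right hCbound hnpos.le
        nlinarith [hlower, hCb2]
      -- there is some j₀ ∉ I, giving nonnegativity of the bound
      obtain ⟨j₀, hj₀⟩ : ∃ j, j ∉ I := by
        by_contra h
        push_neg at h
        exact hIu (Finset.eq_univ_iff_forall.mpr h)
      have hbound_nonneg : (0 : ℝ) ≤ δ (i + 1) * (n : ℝ) ^ k / t := by
        have := key j₀ hj₀
        have h0 : (0 : ℝ) ≤ ((Bj j₀).card : ℝ) := by positivity
        linarith
      -- the bad set
      set B := (Finset.univ : Finset (Fin k → Fin n)) \ Δ I with hB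
      have hBsub : B ⊆ (Finset.univ \ I).biUnion Bj := by
        intro f hf
        rw [hB, Finset.mem_sdiff] at hf
        have hnot := (hrec I hIu f).not.mp hf.2
        push_neg at hnot
        obtain ⟨j, hjI, hjlt⟩ := hnot
        rw [Finset.mem_biUnion]
        refine ⟨j, by simp [hjI], ?_⟩
        rw [hBj]
        simp only [Finset.mem_filter, Finset.mem_univ, true_and]
        push_neg
        exact hjlt
      have hBcard : ((B.card : ℝ)) ≤ (k : ℝ) * (δ (i + 1) * (n : ℝ) ^ k / t) := by
        calc ((B.card : ℝ)) ≤ (((Finset.univ \ I).biUnion Bj).card : ℝ) := by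
              exact_mod_cast Finset.card_le_card hBsub
          _ ≤ ∑ j ∈ Finset.univ \ I, ((Bj j).card : ℝ) := by
              exact_mod_cast Finset.card_biUnion_le
          _ ≤ ∑ _j ∈ Finset.univ \ I, (δ (i + 1) * (n : ℝ) ^ k / t) := by
              apply Finset.sum_le_sum
              intro j hj
              exact key j (by simpa using (Finset.mem_sdiff.mp hj).2)
          _ = ((Finset.univ \ I).card : ℝ) * (δ (i + 1) * (n : ℝ) ^ k / t) := by
              rw [Finset.sum_const]; push_cast; ring
          _ ≤ (k : ℝ) * (δ (i + 1) * (n : ℝ) ^ k / t) := by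
              apply mul_le_mul_of_nonneg_right _ hbound_nonneg
              have : (Finset.univ \ I).card ≤ k := by
                have := Finset.card_le_univ (Finset.univ \ I)
                simpa [Fintype.card_fin] using this
              exact_mod_cast this
      have hBcard' : ((B.card : ℝ)) = (n : ℝ) ^ k - ((Δ I).card : ℝ) := by
        have h1 : B.card = n ^ k - (Δ I).card := by
          rw [hB, Finset.card_sdiff_of_subset (Finset.subset_univ _), Finset.card_univ, hNk]
        have h2 : (Δ I).card ≤ n ^ k := by
          have := Finset.card_le_univ (Δ I)
          rwa [hNk] at this
        rw [h1, Nat.cast_sub h2]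
        push_cast; ring
      have hδieq : δ i * (n : ℝ) ^ k = (k : ℝ) * (δ (i + 1) * (n : ℝ) ^ k / t) := by
        rw [hδi]; field_simp
      rw [hBcard'] at hBcard
      nlinarith [hBcard, hδieq]
end

section
/- In the setting of the contact-family construction on V_1 ∪ ... ∪ V_k with |V_i| = n: if t ≤ 1/(4(d+1)^{k-1}), δ_k ≤ (1/4)(t/k)^{k-1}, and |Δ_{{1,...,k}}^{(t)}| ≥ (1-δ_k)n^k, then there exists a t-perfect vertex set X with |X ∩ V_i| = d for all i, provided ((k/t)^{k-1} δ_k + t(d+1)^{k-1}) n ≤ n - d. -/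
open Finset Function
theorem fiber_card (n k : ℕ) (j : Fin k) (v : Fin n) :
    ((Finset.univ.filter fun g : Fin k → Fin n => g j = v)).card * n = n ^ k := by
  classical
  have h : ((Finset.univ.filter fun g : Fin k → Fin n => g j = v) ×ˢ
      (Finset.univ : Finset (Fin n))).card = (Finset.univ : Finset (Fin k → Fin n)).card := by
    apply Finset.card_nbij' (i := fun p => Function.update p.1 j p.2)
      (j := fun f => (Function.update f j v, f j))
    · intro p hp; exact mem_univ _
    · intro f hf
      simp only [mem_coe, mem_product, mem_filter, mem_univ, true_and]
      exact ⟨Function.update_self j v f, trivial⟩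
    · intro p hp
      simp only [mem_coe, mem_product, mem_filter, mem_univ, true_and] at hp
      have h1 : Function.update (Function.update p.1 j p.2) j v = p.1 := by
        rw [Function.update_idem, ← hp.1, Function.update_eq_self]
      have h2 : Function.update p.1 j p.2 j = p.2 := Function.update_self _ _ _
      exact Prod.ext h1 h2
    · intro f hf
      simp [Function.update_idem, Function.update_eq_self]
  simpa [Fintype.card_fun] using h


theorem dep_aux {k n : ℕ} (Δ : Finset (Fin k) → Finset (Fin k → Fin n)) (t : ℝ)
    (hrec : ∀ I : Finset (Fin k), I ≠ Finset.univ → ∀ f : Fin k → Fin n,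
      (f ∈ Δ I ↔ ∀ j ∉ I, ((1 : ℝ) - t) * n ≤
        ((Finset.univ.filter
          (fun v : Fin n => Function.update f j v ∈ Δ (insert j I))).card : ℝ))) :
    ∀ m (I : Finset (Fin k)), Iᶜ.card ≤ m → ∀ f g : Fin k → Fin n,
      (∀ i ∈ I, f i = g i) → (f ∈ Δ I ↔ g ∈ Δ I) := by
  intro m
  induction m with
  | zero =>
    intro I hI f g hfg
    have hc : Iᶜ = ∅ := card_eq_zero.mp (Nat.le_zero.mp hI)
    have hI : I = Finset.univ := by
      rwa [Finset.compl_eq_empty_iff] at hc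
    subst hI
    rw [funext fun i => hfg i (mem_univ i)]
  | succ m ih =>
    intro I hI f g hfg
    by_cases hIu : I = Finset.univ
    · subst hIu; rw [funext fun i => hfg i (mem_univ i)]
    · rw [hrec I hIu f, hrec I hIu g]
      have key : ∀ j ∉ I, (Finset.univ.filter fun v : Fin n =>
          Function.update f j v ∈ Δ (insert j I)) =
          (Finset.univ.filter fun v => Function.update g j v ∈ Δ (insert j I)) := by
        intro j hj
        apply Finset.filter_congr
        intro v _
        have hjc : j ∈ Iᶜ := Finset.mem_compl.mpr hj
        have hcc : (insert j I)ᶜ = Iᶜ.erase j := by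
          ext x
          simp only [Finset.mem_compl, Finset.mem_insert, Finset.mem_erase, not_or]
        have hle : (insert j I)ᶜ.card ≤ m := by
          rw [hcc, Finset.card_erase_of_mem hjc]
          have h1 : 1 ≤ Iᶜ.card := Finset.card_pos.mpr ⟨j, hjc⟩
          omega
        apply ih (insert j I) hle
        intro i hi
        rcases Finset.mem_insert.mp hi with h | h
        · subst h; simp
        · have hij : i ≠ j := by rintro rfl; exact hj h
          simp [Function.update_of_ne hij, hfg i h]
      constructor <;> intro h j hj
      · rw [← key j hj]; exact h j hj
      · rw [key j hj]; exact h j hj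


theorem pairs_aux {k n : ℕ} (Δ' : Finset (Fin k → Fin n)) (j : Fin k) :
    ∑ f : Fin k → Fin n,
      ((Finset.univ.filter fun v : Fin n => Function.update f j v ∉ Δ').card)
      = (Finset.univ \ Δ').card * n := by
  classical
  have lhs : ∑ f : Fin k → Fin n,
      ((Finset.univ.filter fun v : Fin n => Function.update f j v ∉ Δ').card)
      = ∑ p ∈ (Finset.univ : Finset (Fin k → Fin n)) ×ˢ (Finset.univ : Finset (Fin n)),
        (if Function.update p.1 j p.2 ∉ Δ' then 1 else 0) := by
    rw [Finset.sum_product]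
    congr 1; ext f
    rw [Finset.card_filter]
  have rhs : ((Finset.univ \ Δ').card * n : ℕ)
      = ∑ p ∈ (Finset.univ : Finset (Fin k → Fin n)) ×ˢ (Finset.univ : Finset (Fin n)),
        (if p.1 ∉ Δ' then 1 else 0) := by
    rw [Finset.sum_product]
    have h1 : ∀ f : Fin k → Fin n, ∑ _v : Fin n, (if f ∉ Δ' then 1 else 0) =
        (if f ∉ Δ' then 1 else 0) * n := by
      intro f; rw [Finset.sum_const, Finset.card_univ, Fintype.card_fin, smul_eq_mul,
        mul_comm]
    rw [Finset.sum_congr rfl fun f _ => h1 f, ← Finset.sum_mul]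
    congr 1
    rw [← Finset.card_filter]
    congr 1
    ext f; simp
  rw [lhs, rhs]
  apply Finset.sum_nbij' (i := fun p => (Function.update p.1 j p.2, p.1 j))
    (j := fun p => (Function.update p.1 j p.2, p.1 j))
  · intro p _; exact Finset.mem_product.mpr ⟨mem_univ _, mem_univ _⟩
  · intro p _; exact Finset.mem_product.mpr ⟨mem_univ _, mem_univ _⟩
  · intro p _
    ext
    · simp [Function.update_idem, Function.update_eq_self]
    · simp
  · intro p _
    ext
    · simp [Function.update_idem, Function.update_eq_self]
    · simp
  · intro p _
    simp

theorem count_aux {k n : ℕ} (hn : 0 < n)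
    (Δ : Finset (Fin k) → Finset (Fin k → Fin n)) (t δk : ℝ) (ht0 : 0 < t)
    (hδ0 : 0 ≤ δk)
    (hbase : ((1 : ℝ) - δk) * (n : ℝ) ^ k ≤ ((Δ Finset.univ).card : ℝ))
    (hrec : ∀ I : Finset (Fin k), I ≠ Finset.univ → ∀ f : Fin k → Fin n,
      (f ∈ Δ I ↔ ∀ j ∉ I, ((1 : ℝ) - t) * n ≤
        ((Finset.univ.filter
          (fun v : Fin n => Function.update f j v ∈ Δ (insert j I))).card : ℝ))) :
    ∀ m (I : Finset (Fin k)), Iᶜ.card ≤ m →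
      (n : ℝ) ^ k - ((Δ I).card : ℝ) ≤ ((k : ℝ) / t) ^ Iᶜ.card * δk * (n : ℝ) ^ k := by
  classical
  have hnR : (0 : ℝ) < n := Nat.cast_pos.mpr hn
  have hnk : (0 : ℝ) < (n : ℝ) ^ k := pow_pos hnR k
  have base : ∀ I : Finset (Fin k), Iᶜ.card = 0 →
      (n : ℝ) ^ k - ((Δ I).card : ℝ) ≤ ((k : ℝ) / t) ^ Iᶜ.card * δk * (n : ℝ) ^ k := by
    intro I hI0
    have hI : I = Finset.univ := by
      have : Iᶜ = ∅ := card_eq_zero.mp hI0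
      rwa [Finset.compl_eq_empty_iff] at this
    subst hI
    rw [hI0, pow_zero, one_mul]
    nlinarith
  intro m
  induction m with
  | zero => intro I hI; exact base I (Nat.le_zero.mp hI)
  | succ m ih =>
    intro I hIc
    by_cases hI0 : Iᶜ.card = 0
    · exact base I hI0
    · have hIu : I ≠ Finset.univ := by
        intro h; subst h; simp at hI0
      set c := Iᶜ.card with hc
      have hc1 : 1 ≤ c := Nat.one_le_iff_ne_zero.mpr hI0
      have hck : c ≤ k := by
        have := Finset.card_le_univ Iᶜ
        simpa using this
      set B : Fin k → Finset (Fin k → Fin n) := fun j =>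
        Finset.univ.filter (fun f => ¬ (((1 : ℝ) - t) * n ≤
          ((Finset.univ.filter
            (fun v : Fin n => Function.update f j v ∈ Δ (insert j I))).card : ℝ))) with hB
      have cover : Finset.univ \ Δ I ⊆ Iᶜ.biUnion B := by
        intro f hf
        have hf' : f ∉ Δ I := (Finset.mem_sdiff.mp hf).2
        rw [hrec I hIu f] at hf'
        push_neg at hf'
        obtain ⟨j, hj, hlt⟩ := hf'
        exact Finset.mem_biUnion.mpr ⟨j, Finset.mem_compl.mpr hj,
          Finset.mem_filter.mpr ⟨mem_univ _, not_le.mpr hlt⟩⟩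
      set D : ℝ := ((k : ℝ) / t) ^ (c - 1) * δk * (n : ℝ) ^ k with hD
      have hD0 : 0 ≤ D := by
        apply mul_nonneg (mul_nonneg (pow_nonneg _ _) hδ0) (le_of_lt hnk)
        positivity
      have hBj : ∀ j ∈ Iᶜ, ((B j).card : ℝ) ≤ D / t := by
        intro j hjc
        have hj : j ∉ I := Finset.mem_compl.mp hjc
        set Δ' := Δ (insert j I) with hΔ'
        -- step 1 : each f in B j has many bad v
        have step1 : ∀ f ∈ B j, t * n ≤
            ((Finset.univ.filter fun v : Fin n => Function.update f j v ∉ Δ').card : ℝ) := by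
          intro f hf
          have hf' := (Finset.mem_filter.mp hf).2
          push_neg at hf'
          have hsplit : ((Finset.univ.filter
              (fun v : Fin n => Function.update f j v ∈ Δ')).card)
              + ((Finset.univ.filter fun v : Fin n => Function.update f j v ∉ Δ').card)
              = n := by
            rw [Finset.card_filter_add_card_filter_not]
            simp
          have : ((Finset.univ.filter
              (fun v : Fin n => Function.update f j v ∈ Δ')).card : ℝ)
              + ((Finset.univ.filter fun v : Fin n => Function.update f j v ∉ Δ').card : ℝ)
              = n := by exact_mod_cast congrArg (Nat.cast : ℕ → ℝ) hsplit
          nlinarith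
        -- step 2+3+4 : sum bound
        have step2 : ((B j).card : ℝ) * (t * n) ≤
            ∑ f ∈ B j, ((Finset.univ.filter
              fun v : Fin n => Function.update f j v ∉ Δ').card : ℝ) := by
          have := Finset.card_nsmul_le_sum (B j)
            (fun f => ((Finset.univ.filter
              fun v : Fin n => Function.update f j v ∉ Δ').card : ℝ)) (t * n) step1
          simpa [nsmul_eq_mul] using this
        have step3 : ∑ f ∈ B j, ((Finset.univ.filter
              fun v : Fin n => Function.update f j v ∉ Δ').card : ℝ) ≤
            ∑ f : Fin k → Fin n, ((Finset.univ.filter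
              fun v : Fin n => Function.update f j v ∉ Δ').card : ℝ) := by
          apply Finset.sum_le_sum_of_subset_of_nonneg (Finset.subset_univ _)
          intro f _ _; positivity
        have step4 : ∑ f : Fin k → Fin n, ((Finset.univ.filter
              fun v : Fin n => Function.update f j v ∉ Δ').card : ℝ)
            = ((Finset.univ \ Δ').card : ℝ) * n := by
          exact_mod_cast congrArg (Nat.cast : ℕ → ℝ) (pairs_aux Δ' j)
        have step5 : ((Finset.univ \ Δ').card : ℝ) = (n : ℝ) ^ k - (Δ'.card : ℝ) := by
          rw [Finset.card_sdiff_of_subset (Finset.subset_univ _)]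
          rw [Nat.cast_sub (Finset.card_le_card (Finset.subset_univ _))]
          congr 1
          simp [Fintype.card_fun]
        have hins : (insert j I)ᶜ.card = c - 1 := by
          have hcc : (insert j I)ᶜ = Iᶜ.erase j := by
            ext x
            simp only [Finset.mem_compl, Finset.mem_insert, Finset.mem_erase, not_or]
          rw [hcc, Finset.card_erase_of_mem hjc]
        have step6 : (n : ℝ) ^ k - (Δ'.card : ℝ) ≤ D := by
          have := ih (insert j I) (by omega)
          rwa [hins] at this
        -- combine
        have hfin : ((B j).card : ℝ) * (t * n) ≤ D * n := by
          calc ((B j).card : ℝ) * (t * n) ≤ _ := step2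
            _ ≤ _ := step3
            _ = ((Finset.univ \ Δ').card : ℝ) * n := step4
            _ = ((n : ℝ) ^ k - (Δ'.card : ℝ)) * n := by rw [step5]
            _ ≤ D * n := by nlinarith
        rw [div_eq_mul_inv, ← mul_le_mul_iff_left₀ (mul_pos ht0 hnR)]
        calc ((B j).card : ℝ) * (t * n) ≤ D * n := hfin
          _ = D * t⁻¹ * (t * n) := by field_simp
      -- total
      have htot : ((Finset.univ \ Δ I).card : ℝ) ≤ c * (D / t) := by
        have h1 : (Finset.univ \ Δ I).card ≤ ∑ j ∈ Iᶜ, (B j).card :=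
          le_trans (Finset.card_le_card cover) (Finset.card_biUnion_le)
        have h2 : ((Finset.univ \ Δ I).card : ℝ) ≤ ∑ j ∈ Iᶜ, ((B j).card : ℝ) := by
          exact_mod_cast h1
        refine h2.trans ?_
        have := Finset.sum_le_card_nsmul Iᶜ (fun j => ((B j).card : ℝ)) (D / t) hBj
        simpa [nsmul_eq_mul, hc] using this
      have step5' : ((Finset.univ \ Δ I).card : ℝ) = (n : ℝ) ^ k - ((Δ I).card : ℝ) := by
        rw [Finset.card_sdiff_of_subset (Finset.subset_univ _)]
        rw [Nat.cast_sub (Finset.card_le_card (Finset.subset_univ _))]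
        congr 1
        simp [Fintype.card_fun]
      rw [step5'] at htot
      refine htot.trans ?_
      have hpow : ((k : ℝ) / t) ^ c = ((k : ℝ) / t) * ((k : ℝ) / t) ^ (c - 1) := by
        conv_lhs => rw [show c = (c - 1) + 1 by omega]
        rw [pow_succ]
        ring
      rw [hpow, hD]
      have hcD : (c : ℝ) * (D / t) ≤ (k : ℝ) * (D / t) := by
        apply mul_le_mul_of_nonneg_right _ (div_nonneg hD0 (le_of_lt ht0))
        exact_mod_cast hck
      refine hcD.trans (le_of_eq ?_)
      ring

theorem extend_aux {k n d : ℕ} (hk : 0 < k) (hn : 0 < n)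
    (Δ : Finset (Fin k) → Finset (Fin k → Fin n)) (t δk : ℝ) (ht0 : 0 < t)
    (hrec : ∀ I : Finset (Fin k), I ≠ Finset.univ → ∀ f : Fin k → Fin n,
      (f ∈ Δ I ↔ ∀ j ∉ I, ((1 : ℝ) - t) * n ≤
        ((Finset.univ.filter
          (fun v : Fin n => Function.update f j v ∈ Δ (insert j I))).card : ℝ)))
    (dep : ∀ (I : Finset (Fin k)) (f g : Fin k → Fin n),
      (∀ i ∈ I, f i = g i) → (f ∈ Δ I ↔ g ∈ Δ I))
    (hcnt : ∀ I : Finset (Fin k),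
      (n : ℝ) ^ k - ((Δ I).card : ℝ) ≤ ((k : ℝ) / t) ^ Iᶜ.card * δk * (n : ℝ) ^ k)
    (hside : (((k : ℝ) / t) ^ (k - 1) * δk + t * ((d : ℝ) + 1) ^ (k - 1)) * n
      ≤ (n : ℝ) - d)
    (X : Fin k → Finset (Fin n))
    (hX : ∀ I : Finset (Fin k), I ≠ ∅ → ∀ f : Fin k → Fin n,
        (∀ i ∈ I, f i ∈ X i) → f ∈ Δ I)
    (hXd : ∀ i, (X i).card ≤ d) (j : Fin k) (hj : (X j).card < d) :
    ∃ v ∉ X j, ∀ I : Finset (Fin k), I ≠ ∅ → ∀ f : Fin k → Fin n,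
        (∀ i ∈ I, f i ∈ Function.update X j (insert v (X j)) i) → f ∈ Δ I := by
  classical
  have hnR : (0 : ℝ) < n := Nat.cast_pos.mpr hn
  have hnk : (0 : ℝ) < (n : ℝ) ^ k := pow_pos hnR k
  set z : Fin n := ⟨0, hn⟩ with hz
  set δ1 : ℝ := ((k : ℝ) / t) ^ (k - 1) * δk with hδ1
  -- Step A : bad singletons
  set bad0 : Finset (Fin n) :=
    Finset.univ.filter (fun v => Function.update (fun _ => z) j v ∉ Δ {j}) with hbad0def
  have hbad0 : (bad0.card : ℝ) ≤ δ1 * n := by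
    set s : Finset (Fin k → Fin n) := Finset.univ.filter (fun g => g j ∈ bad0) with hs
    have hsub : s ⊆ Finset.univ \ Δ {j} := by
      intro g hg
      have hgj : g j ∈ bad0 := (Finset.mem_filter.mp hg).2
      have hgj' : Function.update (fun _ => z) j (g j) ∉ Δ {j} :=
        (Finset.mem_filter.mp hgj).2
      refine Finset.mem_sdiff.mpr ⟨mem_univ _, ?_⟩
      intro hgΔ
      apply hgj'
      refine (dep {j} g _ ?_).mp hgΔ
      intro i hi
      rw [Finset.mem_singleton.mp hi]
      simp
    have hcard : s.card * n = bad0.card * n ^ k := by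
      have h1 : s.card = ∑ v ∈ bad0, ((Finset.univ.filter
          fun g : Fin k → Fin n => g j = v)).card := by
        rw [Finset.card_eq_sum_card_fiberwise
          (f := fun g : Fin k → Fin n => g j) (s := s) (t := bad0)
          (fun g hg => (Finset.mem_filter.mp hg).2)]
        apply Finset.sum_congr rfl
        intro v hv
        congr 1
        ext g
        simp only [hs, Finset.mem_filter, Finset.mem_univ, true_and]
        constructor
        · rintro ⟨_, h⟩; exact h
        · intro h; exact ⟨h ▸ hv, h⟩
      rw [h1, Finset.sum_mul]
      rw [Finset.sum_congr rfl (fun v _ => fiber_card n k j v), Finset.sum_const,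
        smul_eq_mul, mul_comm]
    have hsd : ((Finset.univ \ Δ {j}).card : ℝ) = (n : ℝ) ^ k - ((Δ {j}).card : ℝ) := by
      rw [Finset.card_sdiff_of_subset (Finset.subset_univ _),
        Nat.cast_sub (Finset.card_le_card (Finset.subset_univ _))]
      congr 1
      simp [Fintype.card_fun]
    have hcompl : ({j} : Finset (Fin k))ᶜ.card = k - 1 := by
      rw [Finset.card_compl]
      simp
    have hle : ((s.card : ℝ)) ≤ δ1 * (n : ℝ) ^ k := by
      have h2 : ((s.card : ℝ)) ≤ ((Finset.univ \ Δ {j}).card : ℝ) := by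
        exact_mod_cast Finset.card_le_card hsub
      rw [hsd] at h2
      refine h2.trans ?_
      have := hcnt {j}
      rwa [hcompl, ← hδ1] at this
    have hcardR : (s.card : ℝ) * n = (bad0.card : ℝ) * (n : ℝ) ^ k := by
      exact_mod_cast congrArg (Nat.cast : ℕ → ℝ) hcard
    have : (bad0.card : ℝ) * (n : ℝ) ^ k ≤ δ1 * n * (n : ℝ) ^ k := by
      rw [← hcardR]
      calc (s.card : ℝ) * n ≤ δ1 * (n:ℝ)^k * n := by nlinarith
        _ = δ1 * n * (n:ℝ)^k := by ring
    exact le_of_mul_le_mul_right (by linarith) hnk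
  -- Step B : nonempty patterns
  set Cond : Finset (Fin k) × (Fin k → Fin n) → Prop := fun p =>
    j ∉ p.1 ∧ p.1 ≠ ∅ ∧ ∀ i, (i ∈ p.1 → p.2 i ∈ X i) ∧ (i ∉ p.1 → p.2 i = z)
    with hCond
  set S' : Finset (Finset (Fin k) × (Fin k → Fin n)) := Finset.univ.filter Cond with hS'def
  have hS' : ((S'.card : ℝ)) ≤ ((d : ℝ) + 1) ^ (k - 1) := by
    set T : Finset (Fin k → Option (Fin n)) := Fintype.piFinset
      (fun i : Fin k => if i = j then ({none} : Finset (Option (Fin n)))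
        else insert none ((X i).image some)) with hT
    have hinj : S'.card ≤ T.card := by
      apply Finset.card_le_card_of_injOn
        (f := fun p i => if i ∈ p.1 then some (p.2 i) else none)
      · intro p hp
        obtain ⟨hjp, hpne, hpX⟩ := (Finset.mem_filter.mp hp).2
        rw [hT, Finset.mem_coe, Fintype.mem_piFinset]
        dsimp only
        intro i
        by_cases hij : i = j
        · subst hij
          simp [if_neg hjp]
        · rw [if_neg hij]
          by_cases hip : i ∈ p.1
          · rw [if_pos hip]
            exact Finset.mem_insert_of_mem
              (Finset.mem_image_of_mem some ((hpX i).1 hip))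
          · rw [if_neg hip]
            exact Finset.mem_insert_self _ _
      · intro p hp q hq hpq
        obtain ⟨hjp, hpne, hpX⟩ := (Finset.mem_filter.mp hp).2
        obtain ⟨hjq, hqne, hqX⟩ := (Finset.mem_filter.mp hq).2
        have hsets : p.1 = q.1 := by
          ext i
          constructor
          · intro hi
            by_contra hiq
            have h5 := congrFun hpq i
            simp [hi, hiq] at h5
          · intro hi
            by_contra hip
            have h5 := congrFun hpq i
            simp [hi, hip] at h5
        have hfun : p.2 = q.2 := by
          funext i
          by_cases hip : i ∈ p.1
          · have hiq : i ∈ q.1 := hsets ▸ hip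
            have h5 := congrFun hpq i
            simp [hip, hiq] at h5
            exact h5
          · have hiq : i ∉ q.1 := hsets ▸ hip
            rw [(hpX i).2 hip, (hqX i).2 hiq]
        exact Prod.ext hsets hfun
    have hTcard : T.card ≤ (d + 1) ^ (k - 1) := by
      rw [hT, Fintype.card_piFinset]
      have hb : ∀ i ∈ Finset.univ, ((if i = j then ({none} : Finset (Option (Fin n)))
          else insert none ((X i).image some)).card) ≤ (if i = j then 1 else d + 1) := by
        intro i _
        by_cases hij : i = j
        · simp [hij]
        · rw [if_neg hij, if_neg hij]
          refine (Finset.card_insert_le _ _).trans ?_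
          have := (Finset.card_image_le (s := X i) (f := some)).trans (hXd i)
          omega
      refine (Finset.prod_le_prod' hb).trans (le_of_eq ?_)
      rw [← Finset.mul_prod_erase Finset.univ _ (Finset.mem_univ j), if_pos rfl, one_mul]
      rw [Finset.prod_congr rfl (fun i hi => if_neg (Finset.mem_erase.mp hi).1),
        Finset.prod_const, Finset.card_erase_of_mem (Finset.mem_univ j)]
      simp
    calc ((S'.card : ℝ)) ≤ (T.card : ℝ) := by exact_mod_cast hinj
      _ ≤ ((d + 1 : ℕ) : ℝ) ^ (k - 1) := by exact_mod_cast hTcard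
      _ = ((d : ℝ) + 1) ^ (k - 1) := by push_cast; ring
  -- Step C : the bad set
  set badset : Finset (Fin k) × (Fin k → Fin n) → Finset (Fin n) := fun p =>
    Finset.univ.filter (fun v => Function.update p.2 j v ∉ Δ (insert j p.1)) with hbadset
  set Bad : Finset (Fin n) := Finset.univ.filter (fun v => ∃ I : Finset (Fin k),
    j ∉ I ∧ ∃ f : Fin k → Fin n, (∀ i ∈ I, f i ∈ X i) ∧
      Function.update f j v ∉ Δ (insert j I)) with hBaddef
  have cover : Bad ⊆ bad0 ∪ S'.biUnion badset := by
    intro v hv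
    obtain ⟨I, hjI, f, hfX, hbadv⟩ := (Finset.mem_filter.mp hv).2
    by_cases hIe : I = ∅
    · subst hIe
      apply Finset.mem_union_left
      rw [hbad0def, Finset.mem_filter]
      refine ⟨mem_univ _, ?_⟩
      intro hmem
      apply hbadv
      have hagree : ∀ i ∈ ({j} : Finset (Fin k)),
          Function.update (fun _ => z) j v i = Function.update f j v i := by
        intro i hi
        rw [Finset.mem_singleton.mp hi]
        simp
      have h5 := (dep {j} _ _ hagree).mp hmem
      simpa using h5
    · apply Finset.mem_union_right
      refine Finset.mem_biUnion.mpr ⟨(I, fun i => if i ∈ I then f i else z), ?_, ?_⟩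
      · rw [hS'def, Finset.mem_filter]
        refine ⟨mem_univ _, hjI, hIe, ?_⟩
        intro i
        constructor
        · intro hi; simpa [if_pos hi] using hfX i hi
        · intro hi; simp [if_neg hi]
      · rw [hbadset]
        simp only [Finset.mem_filter, Finset.mem_univ, true_and]
        intro hmem
        apply hbadv
        refine (dep (insert j I) _ _ ?_).mp hmem
        intro i hi
        rcases Finset.mem_insert.mp hi with h | h
        · subst h; simp
        · have hij : i ≠ j := by rintro rfl; exact hjI h
          simp [Function.update_of_ne hij, if_pos h]
  have hbadp : ∀ p ∈ S', ((badset p).card : ℝ) ≤ t * n := by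
    intro p hp
    obtain ⟨hjp, hpne, hpX⟩ := (Finset.mem_filter.mp hp).2
    have hpΔ : p.2 ∈ Δ p.1 := hX p.1 hpne p.2 (fun i hi => (hpX i).1 hi)
    have hpu : p.1 ≠ Finset.univ := by
      intro h; rw [h] at hjp; exact hjp (mem_univ j)
    have hgood := (hrec p.1 hpu p.2).mp hpΔ j hjp
    have hsplit : ((Finset.univ.filter
        (fun v : Fin n => Function.update p.2 j v ∈ Δ (insert j p.1))).card)
        + (badset p).card = n := by
      rw [hbadset]
      rw [Finset.card_filter_add_card_filter_not]
      simp
    have : ((Finset.univ.filter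
        (fun v : Fin n => Function.update p.2 j v ∈ Δ (insert j p.1))).card : ℝ)
        + ((badset p).card : ℝ) = n := by exact_mod_cast congrArg (Nat.cast : ℕ → ℝ) hsplit
    nlinarith
  have hBad : ((Bad.card : ℝ)) ≤ (n : ℝ) - d := by
    have h1 : (Bad.card : ℕ) ≤ bad0.card + ∑ p ∈ S', (badset p).card := by
      refine (Finset.card_le_card cover).trans ?_
      refine (Finset.card_union_le _ _).trans ?_
      exact Nat.add_le_add_left (Finset.card_biUnion_le) _
    have h2 : ((Bad.card : ℝ)) ≤ (bad0.card : ℝ) + ∑ p ∈ S', ((badset p).card : ℝ) := by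
      exact_mod_cast h1
    have h3 : ∑ p ∈ S', ((badset p).card : ℝ) ≤ (S'.card : ℝ) * (t * n) := by
      have := Finset.sum_le_card_nsmul S' (fun p => ((badset p).card : ℝ)) (t * n) hbadp
      simpa [nsmul_eq_mul] using this
    have h4 : (S'.card : ℝ) * (t * n) ≤ ((d : ℝ) + 1) ^ (k - 1) * (t * n) := by
      apply mul_le_mul_of_nonneg_right hS'
      positivity
    calc ((Bad.card : ℝ)) ≤ (bad0.card : ℝ) + ∑ p ∈ S', ((badset p).card : ℝ) := h2
      _ ≤ δ1 * n + ((d : ℝ) + 1) ^ (k - 1) * (t * n) := by linarith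
      _ = (((k : ℝ) / t) ^ (k - 1) * δk + t * ((d : ℝ) + 1) ^ (k - 1)) * n := by
          rw [hδ1]; ring
      _ ≤ (n : ℝ) - d := hside
  -- Step D : find a fresh vertex
  have hXjR : ((X j).card : ℝ) ≤ (d : ℝ) - 1 := by
    have h0 : (X j).card + 1 ≤ d := hj
    have h0' := (Nat.cast_le (α := ℝ)).mpr h0
    push_cast at h0'
    linarith
  have hvex : ∃ v, v ∉ Bad ∪ X j := by
    by_contra h
    push_neg at h
    have hsub2 : Finset.univ ⊆ Bad ∪ X j := fun v _ => h v
    have hcard := Finset.card_le_card hsub2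
    rw [Finset.card_univ, Fintype.card_fin] at hcard
    have h5 : ((Bad ∪ X j).card : ℝ) ≤ (Bad.card : ℝ) + ((X j).card : ℝ) := by
      exact_mod_cast Finset.card_union_le Bad (X j)
    have h6 : (n : ℝ) ≤ ((Bad ∪ X j).card : ℝ) := by exact_mod_cast hcard
    linarith
  obtain ⟨v, hv⟩ := hvex
  have hvB : v ∉ Bad := fun h => hv (Finset.mem_union_left _ h)
  have hvX : v ∉ X j := fun h => hv (Finset.mem_union_right _ h)
  refine ⟨v, hvX, ?_⟩
  -- Step E : goodness of the extended family
  have hvB' : ∀ I : Finset (Fin k), j ∉ I → ∀ f : Fin k → Fin n,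
      (∀ i ∈ I, f i ∈ X i) → Function.update f j v ∈ Δ (insert j I) := by
    intro I hjI f hfX
    by_contra hcon
    apply hvB
    rw [hBaddef, Finset.mem_filter]
    exact ⟨mem_univ _, I, hjI, f, hfX, hcon⟩
  intro I hIne f hf
  by_cases hjI : j ∈ I
  · by_cases hfv : f j ∈ X j
    · apply hX I hIne f
      intro i hi
      by_cases hij : i = j
      · subst hij; exact hfv
      · have := hf i hi
        rwa [Function.update_of_ne hij] at this
    · have hfj : f j = v := by
        have := hf j hjI
        rw [Function.update_self] at this
        rcases Finset.mem_insert.mp this with h | h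
        · exact h
        · exact absurd h hfv
      have hkey := hvB' (I.erase j) (Finset.notMem_erase j I) f ?_
      · rw [Finset.insert_erase hjI] at hkey
        rwa [← hfj, Function.update_eq_self] at hkey
      · intro i hi
        obtain ⟨hij, hiI⟩ := Finset.mem_erase.mp hi
        have := hf i hiI
        rwa [Function.update_of_ne hij] at this
  · apply hX I hIne f
    intro i hi
    have hij : i ≠ j := fun h => hjI (h ▸ hi)
    have := hf i hi
    rwa [Function.update_of_ne hij] at this


/-- existence of a t-perfect vertex set in the contact-family
construction. Partial transversals are encoded as total functions Fin k → Fin n (as in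
the counting lemma). If t ≤ 1/(4(d+1)^{k-1}), δ_k ≤ (1/4)(t/k)^{k-1},
|Δ univ| ≥ (1-δ_k)n^k and ((k/t)^{k-1}δ_k + t(d+1)^{k-1})n ≤ n - d, then there is a
vertex set X with |X ∩ V_i| = d for all i such that every nonempty partial transversal
contained in X belongs to the contact family (i.e. to Δ I for its support I). -/
theorem stmt_16 {k n d : ℕ} (hk : 0 < k) (hn : 0 < n)
    (Δ : Finset (Fin k) → Finset (Fin k → Fin n))
    (t δk : ℝ) (ht0 : 0 < t)
    (ht : t ≤ 1 / (4 * ((d : ℝ) + 1) ^ (k - 1)))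
    (hδk : δk ≤ (1 / 4) * (t / k) ^ (k - 1))
    (hbase : ((1 : ℝ) - δk) * (n : ℝ) ^ k ≤ ((Δ Finset.univ).card : ℝ))
    (hrec : ∀ I : Finset (Fin k), I ≠ Finset.univ → ∀ f : Fin k → Fin n,
      (f ∈ Δ I ↔ ∀ j ∉ I, ((1 : ℝ) - t) * n ≤
        ((Finset.univ.filter
          (fun v : Fin n => Function.update f j v ∈ Δ (insert j I))).card : ℝ)))
    (hside : (((k : ℝ) / t) ^ (k - 1) * δk + t * ((d : ℝ) + 1) ^ (k - 1)) * n
      ≤ (n : ℝ) - d) :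
    ∃ X : Fin k → Finset (Fin n), (∀ i, (X i).card = d) ∧
      ∀ I : Finset (Fin k), I ≠ ∅ → ∀ f : Fin k → Fin n,
        (∀ i ∈ I, f i ∈ X i) → f ∈ Δ I := by
  classical
  have hnR : (0 : ℝ) < n := Nat.cast_pos.mpr hn
  have hnk : (0 : ℝ) < (n : ℝ) ^ k := pow_pos hnR k
  have hδ0 : 0 ≤ δk := by
    have h1 : ((Δ Finset.univ).card : ℝ) ≤ (n : ℝ) ^ k := by
      have h2 := Finset.card_le_univ (Δ Finset.univ)
      calc ((Δ Finset.univ).card : ℝ) ≤ ((Finset.univ : Finset (Fin k → Fin n)).card : ℝ) := by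
            exact_mod_cast h2
        _ = (n : ℝ) ^ k := by
            rw [Finset.card_univ]
            simp [Fintype.card_fun]
    nlinarith
  have dep : ∀ (I : Finset (Fin k)) (f g : Fin k → Fin n),
      (∀ i ∈ I, f i = g i) → (f ∈ Δ I ↔ g ∈ Δ I) := by
    intro I f g h
    exact dep_aux Δ t hrec k I (by simpa using Finset.card_le_univ Iᶜ) f g h
  have hcnt : ∀ I : Finset (Fin k),
      (n : ℝ) ^ k - ((Δ I).card : ℝ) ≤ ((k : ℝ) / t) ^ Iᶜ.card * δk * (n : ℝ) ^ k :=
    fun I => count_aux hn Δ t δk ht0 hδ0 hbase hrec k I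
      (by simpa using Finset.card_le_univ Iᶜ)
  -- fill-up induction
  have main : ∀ r : ℕ, ∀ X : Fin k → Finset (Fin n),
      (∀ I : Finset (Fin k), I ≠ ∅ → ∀ f : Fin k → Fin n,
        (∀ i ∈ I, f i ∈ X i) → f ∈ Δ I) →
      (∀ i, (X i).card ≤ d) → (∑ i, (d - (X i).card)) ≤ r →
      ∃ Y : Fin k → Finset (Fin n), (∀ i, (Y i).card = d) ∧
        (∀ I : Finset (Fin k), I ≠ ∅ → ∀ f : Fin k → Fin n,
          (∀ i ∈ I, f i ∈ Y i) → f ∈ Δ I) := by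
    intro r
    induction r with
    | zero =>
      intro X hgood hle hsum
      refine ⟨X, ?_, hgood⟩
      intro i
      have h0 : (d - (X i).card) = 0 :=
        (Finset.sum_eq_zero_iff).mp (Nat.le_zero.mp hsum) i (Finset.mem_univ i)
      have := hle i
      omega
    | succ r ih =>
      intro X hgood hle hsum
      by_cases hall : ∀ i, (X i).card = d
      · exact ⟨X, hall, hgood⟩
      · push_neg at hall
        obtain ⟨j, hj⟩ := hall
        have hjlt : (X j).card < d := lt_of_le_of_ne (hle j) hj
        obtain ⟨v, hvX, hgood'⟩ := extend_aux hk hn Δ t δk ht0 hrec dep hcnt hside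
          X hgood hle j hjlt
        set X' := Function.update X j (insert v (X j)) with hX'
        have hcard' : (X' j).card = (X j).card + 1 := by
          rw [hX', Function.update_self, Finset.card_insert_of_notMem hvX]
        have hle' : ∀ i, (X' i).card ≤ d := by
          intro i
          by_cases hij : i = j
          · subst hij; omega
          · rw [hX', Function.update_of_ne hij]; exact hle i
        apply ih X' hgood' hle'
        have e1 : ∑ i, (d - (X' i).card)
            = (d - (X' j).card) + ∑ i ∈ Finset.univ.erase j, (d - (X' i).card) :=
          (Finset.add_sum_erase _ _ (Finset.mem_univ j)).symm
        have e2 : ∑ i, (d - (X i).card)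
            = (d - (X j).card) + ∑ i ∈ Finset.univ.erase j, (d - (X i).card) :=
          (Finset.add_sum_erase _ _ (Finset.mem_univ j)).symm
        have e3 : ∑ i ∈ Finset.univ.erase j, (d - (X' i).card)
            = ∑ i ∈ Finset.univ.erase j, (d - (X i).card) := by
          apply Finset.sum_congr rfl
          intro i hi
          rw [hX', Function.update_of_ne (Finset.mem_erase.mp hi).1]
        rw [e2] at hsum
        omega
  obtain ⟨Y, hY1, hY2⟩ := main (∑ _i : Fin k, d) (fun _ => ∅)
    (by
      intro I hI f hf
      obtain ⟨i, hi⟩ := Finset.nonempty_iff_ne_empty.mpr hI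
      exact absurd (hf i hi) (Finset.notMem_empty _))
    (fun i => Nat.zero_le d)
    (by simp)
  exact ⟨Y, hY1, hY2⟩
end
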